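/- arXiv:1710.08775 — 6 statements merged into one kernel-verified Lean document; each statement's English description precedes it below -/
import Mathlib

section
/- Marginalization of a directed graph with hyperedges (HEDG) preserves ancestral relations: if G is a HEDG, W ⊆ V, and G^marg is the marginalization of G onto W, then for any two nodes v, w ∈ W, v is an ancestor of w in G if and only if v is an ancestor of w in G^marg. -/
namespace HedgPaper

variable {V : Type*}

/-- directed reachability: existence of a directed path (possibly trivial). -/
def Reach (E : V → V → Prop) : V → V → Prop := Relation.ReflTransGen E

/-- `v` and `w` lie in the same strongly connected component. -/
def InSC (E : V → V → Prop) (v w : V) : Prop := Reach E v w ∧ Reach E w v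

/-- the set of ancestors of a set `Z`. -/
def AncSet (E : V → V → Prop) (Z : Set V) : Set V := {v | ∃ z ∈ Z, Reach E v z}

/-- `H` is a simplicial complex over `V`. -/
def IsSimplicial (H : Set (Set V)) : Prop :=
  (∀ v : V, ({v} : Set V) ∈ H) ∧ ∀ F ∈ H, ∀ F' : Set V, F' ⊆ F → F' ∈ H

/-- direction of an edge on a path: forward, backward, or bidirected. -/
inductive EDir : Type
  | fwd | bwd | bi

/-- one step of a walk in a HEDG. -/
structure Step (V : Type*) where
  src : V
  dir : EDir
  dst : V

/-- the step is an actual (directed or bidirected) edge of the HEDG `(V,E,H)`. -/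
def Step.Valid (E : V → V → Prop) (H : Set (Set V)) (s : Step V) : Prop :=
  match s.dir with
  | .fwd => E s.src s.dst
  | .bwd => E s.dst s.src
  | .bi  => s.src ≠ s.dst ∧ ({s.src, s.dst} : Set V) ∈ H

/-- the step has an arrowhead at its destination. -/
def Step.HeadAtDst (s : Step V) : Prop := s.dir = EDir.fwd ∨ s.dir = EDir.bi

/-- the step has an arrowhead at its source. -/
def Step.HeadAtSrc (s : Step V) : Prop := s.dir = EDir.bwd ∨ s.dir = EDir.bi

/-- `l` is a walk (path, possibly with repeated nodes) from `x` to `y` in `(V,E,H)`. -/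
def IsWalk (E : V → V → Prop) (H : Set (Set V)) : List (Step V) → V → V → Prop
  | [], x, y => x = y
  | s :: l, x, y => s.src = x ∧ s.Valid E H ∧ IsWalk E H l s.dst y

/-- all interior nodes of the walk are `Z`-open in the d-separation sense:
colliders are ancestors of `Z`, non-colliders are not in `Z`. -/
def DInteriorOpen (E : V → V → Prop) (Z : Set V) : List (Step V) → Prop
  | [] => True
  | [_] => True
  | s :: t :: l =>
      ((s.HeadAtDst ∧ t.HeadAtSrc) → s.dst ∈ AncSet E Z) ∧
      (¬ (s.HeadAtDst ∧ t.HeadAtSrc) → s.dst ∉ Z) ∧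
      DInteriorOpen E Z (t :: l)

/-- `X` is d-separated from `Y` given `Z` in the HEDG `(V,E,H)`:
every walk from `X` to `Y` is `Z`-blocked. -/
def DSep (E : V → V → Prop) (H : Set (Set V)) (X Y Z : Set V) : Prop :=
  ∀ x ∈ X, ∀ y ∈ Y, ∀ l : List (Step V),
    IsWalk E H l x y → ¬ (x ∉ Z ∧ y ∉ Z ∧ DInteriorOpen E Z l)

/-- all interior nodes of the walk are `Z`-σ-open: colliders are ancestors of `Z`,
and a non-collider in `Z` must not point (via a directed edge of the path) to a
node outside of its strongly connected component. -/
def SigmaInteriorOpen (E : V → V → Prop) (Z : Set V) : List (Step V) → Prop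
  | [] => True
  | [_] => True
  | s :: t :: l =>
      ((s.HeadAtDst ∧ t.HeadAtSrc) → s.dst ∈ AncSet E Z) ∧
      (¬ (s.HeadAtDst ∧ t.HeadAtSrc) →
        ¬ (s.dst ∈ Z ∧ ((¬ s.HeadAtDst ∧ ¬ InSC E s.dst s.src) ∨
                        (¬ t.HeadAtSrc ∧ ¬ InSC E s.dst t.dst)))) ∧
      SigmaInteriorOpen E Z (t :: l)

/-- `X` is σ-separated from `Y` given `Z` in the HEDG `(V,E,H)`. -/
def SigmaSep (E : V → V → Prop) (H : Set (Set V)) (X Y Z : Set V) : Prop :=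
  ∀ x ∈ X, ∀ y ∈ Y, ∀ l : List (Step V),
    IsWalk E H l x y → ¬ (x ∉ Z ∧ y ∉ Z ∧ SigmaInteriorOpen E Z l)

/-- directed edges of the marginalization of `(V,E,H)` w.r.t. (i.e. after removing) `U`:
`a → b` iff there is a directed path `a → u₁ → ⋯ → u_r → b` in `G` with all `uᵢ ∈ U`. -/
def MargE (E : V → V → Prop) (U : Set V) : V → V → Prop :=
  fun a b => a ∉ U ∧ b ∉ U ∧
    ∃ c, Relation.ReflTransGen (fun x y => E x y ∧ y ∈ U) a c ∧ E c b

/-- hyperedges of the marginalization of `(V,E,H)` w.r.t. `U`. -/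
def MargH (E : V → V → Prop) (H : Set (Set V)) (U : Set V) : Set (Set V) :=
  {F' | (∀ v ∈ F', v ∉ U) ∧ ∃ F ∈ H, F ⊆ F' ∪ U ∧
    ∀ v ∈ F', (v ∈ F ∧ v ∉ U) ∨
      ∃ u ∈ F ∩ U, ∃ c, Relation.ReflTransGen (fun x y => E x y ∧ y ∈ U) u c ∧ E c v}

/-- bidirected-edge relation induced by the hyperedges. -/
def BiRel (H : Set (Set V)) : V → V → Prop :=
  fun x y => x ≠ y ∧ ({x, y} : Set V) ∈ H

/-- (generalized) moralization of a HEDG: `v — w` iff there are `a`, `b` with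
`v ∈ {a} ∪ Pa(a)`, `w ∈ {b} ∪ Pa(b)` and a bidirected chain `a ↔ ⋯ ↔ b`. -/
def MoralE (E : V → V → Prop) (H : Set (Set V)) : V → V → Prop :=
  fun v w => v ≠ w ∧ ∃ a b, (v = a ∨ E v a) ∧ (w = b ∨ E w b) ∧
    Relation.ReflTransGen (BiRel H) a b

/-- moralization of a directed graph: undirected versions of the directed edges plus
edges between distinct parents of a common child. -/
def MoralDirE (E : V → V → Prop) : V → V → Prop :=
  fun v w => v ≠ w ∧ (E v w ∨ E w v ∨ ∃ c, E v c ∧ E w c)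

/-- marginalization of an undirected graph `A` w.r.t. `W`: `a — b` iff there is a path
from `a` to `b` with all intermediate nodes in `W`. -/
def MargUnd (A : V → V → Prop) (W : Set V) : V → V → Prop :=
  fun a b => a ∉ W ∧ b ∉ W ∧ a ≠ b ∧
    ∃ c, Relation.ReflTransGen (fun x y => A x y ∧ y ∈ W) a c ∧ A c b

/-- separation in an undirected graph: every path from `X` to `Y` contains a node of
`Z` (including the endnodes). -/
def USep (A : V → V → Prop) (X Y Z : Set V) : Prop :=
  ∀ x ∈ X, ∀ y ∈ Y,
    ¬ (x ∉ Z ∧ Relation.ReflTransGen (fun a b => A a b ∧ b ∉ Z) x y)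

/-- edges of the induced sub-HEDG on `A`. -/
def InducedE (E : V → V → Prop) (A : Set V) : V → V → Prop :=
  fun a b => a ∈ A ∧ b ∈ A ∧ E a b

/-- hyperedges of the induced sub-HEDG on `A`. -/
def InducedH (H : Set (Set V)) (A : Set V) : Set (Set V) := {F | F ∈ H ∧ F ⊆ A}

/-- `F` is an inclusion-maximal hyperedge of `H`. -/
def MaximalHyperedge (H : Set (Set V)) (F : Set V) : Prop :=
  F ∈ H ∧ ∀ F' ∈ H, F ⊆ F' → F' = F

/-- edges of the augmented directed graph of a HEDG: the original directed edges plus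
`e_F → v` for every maximal hyperedge `F` and every `v ∈ F`. -/
def AugE (E : V → V → Prop) (H : Set (Set V)) :
    V ⊕ {F : Set V // MaximalHyperedge H F} →
    V ⊕ {F : Set V // MaximalHyperedge H F} → Prop
  | .inl v, .inl w => E v w
  | .inr F, .inl v => v ∈ F.1
  | _, _ => False

/-- the trivial simplicial complex (only subsingleton hyperedges), making a directed
graph a HEDG without bidirected edges. -/
def TrivialH (W : Type*) : Set (Set W) := {F | Set.Subsingleton F}

/-- directed edges of the acyclification of a HEDG. -/
def AcyE (E : V → V → Prop) : V → V → Prop :=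
  fun v w => ¬ InSC E v w ∧ ∃ w', InSC E w w' ∧ E v w'

/-- hyperedges of the acyclification of a HEDG. -/
def AcyH (E : V → V → Prop) (H : Set (Set V)) : Set (Set V) :=
  {F' | ∃ F ∈ H, ∀ x ∈ F', ∃ v ∈ F, InSC E v x}


/-- Marginalization of a HEDG preserves ancestral relations: for nodes
`v, w` of the marginalization `G^marg` of `G` onto `W`, `v` is an ancestor of `w` in `G`
iff `v` is an ancestor of `w` in `G^marg`. -/
theorem marginalization_preserves_ancestors {V : Type*} [Fintype V]
    (E : V → V → Prop) (H : Set (Set V)) (hH : IsSimplicial H)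
    (W : Set V) (v w : V) (hv : v ∈ W) (hw : w ∈ W) :
    Reach E v w ↔ Reach (MargE E Wᶜ) v w := by
  constructor
  · intro h
    -- invariant: from any `p ∈ W` that reaches the current node through `Wᶜ`,
    -- `p` reaches `w` in the marginalization.
    have key : ∀ p ∈ W, Relation.ReflTransGen (fun x y => E x y ∧ y ∈ Wᶜ) p v →
        Reach (MargE E Wᶜ) p w := by
      clear hv
      induction h using Relation.ReflTransGen.head_induction_on with
      | refl =>
        intro p hp hrtg
        rcases hrtg.cases_tail with h' | ⟨b, _, hb⟩
        · exact h' ▸ Relation.ReflTransGen.refl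
        · exact absurd hw hb.2
      | head hab _ ih =>
        rename_i a b _
        intro p hp hrtg
        by_cases hb : b ∈ W
        · have hedge : MargE E Wᶜ p b :=
            ⟨fun h' => h' hp, fun h' => h' hb, a, hrtg, hab⟩
          exact Relation.ReflTransGen.head hedge (ih b hb Relation.ReflTransGen.refl)
        · exact ih p hp (hrtg.tail ⟨hab, hb⟩)
    exact key v hv Relation.ReflTransGen.refl
  · intro h
    clear hv hw
    induction h with
    | refl => exact Relation.ReflTransGen.refl
    | tail _ hedge ih =>
      rcases hedge with ⟨_, _, c, hrtg, hcb⟩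
      exact ih.trans ((Relation.ReflTransGen.mono (fun x y (h' : E x y ∧ y ∈ Wᶜ) => h'.1) _ _ hrtg).tail hcb)

end HedgPaper
end

section
/- Marginalizations of a HEDG with respect to disjoint subsets commute: if G=(V,E,H) is a HEDG and U₁, U₂ ⊆ V are disjoint, then (G^{marg∖U₁})^{marg∖U₂} = G^{marg∖(U₁∪U₂)} = (G^{marg∖U₂})^{marg∖U₁}. -/
namespace HedgPaper

variable {V : Type*}

section Aux

variable {V' : Type*} {E : V' → V' → Prop} {U₁ U₂ : Set V'}

private lemma lift_walk (a d : V')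
    (h : Relation.ReflTransGen (fun x y => MargE E U₁ x y ∧ y ∈ U₂) a d) :
    Relation.ReflTransGen (fun x y => E x y ∧ y ∈ U₁ ∪ U₂) a d := by
  induction h with
  | refl => exact .refl
  | tail _ hstep ih =>
    obtain ⟨⟨_, _, c, hrtg, hE⟩, hy⟩ := hstep
    exact ih.trans ((Relation.ReflTransGen.mono (fun x y h => ⟨h.1, Or.inl h.2⟩) _ _ hrtg).tail ⟨hE, Or.inr hy⟩)

private lemma split_walk (hdisj : Disjoint U₁ U₂) {a x : V'} (ha : a ∉ U₁)
    (h : Relation.ReflTransGen (fun x y => E x y ∧ y ∈ U₁ ∪ U₂) a x) :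
    ∃ d, Relation.ReflTransGen (fun x y => MargE E U₁ x y ∧ y ∈ U₂) a d ∧ d ∉ U₁ ∧
      Relation.ReflTransGen (fun x y => E x y ∧ y ∈ U₁) d x := by
  induction h with
  | refl => exact ⟨a, .refl, ha, .refl⟩
  | @tail b y _ hstep ih =>
    obtain ⟨d, hwalk, hd, hrtg⟩ := ih
    rcases hstep.2 with hy | hy
    · exact ⟨d, hwalk, hd, hrtg.tail ⟨hstep.1, hy⟩⟩
    · have hy1 : y ∉ U₁ := fun h1 => Set.disjoint_left.mp hdisj h1 hy
      exact ⟨y, hwalk.tail ⟨⟨hd, hy1, b, hrtg, hstep.1⟩, hy⟩, hy1, .refl⟩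

private lemma first_entry {a c : V'}
    (h : Relation.ReflTransGen (fun x y => E x y ∧ y ∈ U₁ ∪ U₂) a c) :
    Relation.ReflTransGen (fun x y => E x y ∧ y ∈ U₁) a c ∨
    ∃ w ∈ U₂, (∃ c', Relation.ReflTransGen (fun x y => E x y ∧ y ∈ U₁) a c' ∧ E c' w) ∧
      Relation.ReflTransGen (fun x y => E x y ∧ y ∈ U₁ ∪ U₂) w c := by
  induction h using Relation.ReflTransGen.head_induction_on with
  | refl => exact Or.inl .refl
  | head hstep h ih =>
    rcases hstep.2 with h1 | h2
    · rcases ih with hl | ⟨w, hw, ⟨c', r1, e1⟩, r2⟩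
      · exact Or.inl (hl.head ⟨hstep.1, h1⟩)
      · exact Or.inr ⟨w, hw, ⟨c', r1.head ⟨hstep.1, h1⟩, e1⟩, r2⟩
    · exact Or.inr ⟨_, h2, ⟨_, .refl, hstep.1⟩, h⟩

private lemma margRT_to_RT {a b : V'}
    (h : ∃ d, Relation.ReflTransGen (fun x y => MargE E U₁ x y ∧ y ∈ U₂) a d ∧
      MargE E U₁ d b) :
    ∃ c, Relation.ReflTransGen (fun x y => E x y ∧ y ∈ U₁ ∪ U₂) a c ∧ E c b := by
  obtain ⟨d, hw, _, _, c, hrtg, hE⟩ := h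
  exact ⟨c, (lift_walk a d hw).trans (Relation.ReflTransGen.mono (fun x y h => ⟨h.1, Or.inl h.2⟩) _ _ hrtg), hE⟩

private lemma RT_to_margRT (hdisj : Disjoint U₁ U₂) {a b : V'} (ha : a ∉ U₁) (hb : b ∉ U₁)
    (h : ∃ c, Relation.ReflTransGen (fun x y => E x y ∧ y ∈ U₁ ∪ U₂) a c ∧ E c b) :
    ∃ d, Relation.ReflTransGen (fun x y => MargE E U₁ x y ∧ y ∈ U₂) a d ∧
      MargE E U₁ d b := by
  obtain ⟨c, hrtg, hE⟩ := h
  obtain ⟨d, hwalk, hd, hrtg'⟩ := split_walk hdisj ha hrtg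
  exact ⟨d, hwalk, hd, hb, c, hrtg', hE⟩

private lemma RT_comp {S : Set V'} {w u v : V'}
    (h1 : ∃ c, Relation.ReflTransGen (fun x y => E x y ∧ y ∈ S) w c ∧ E c u) (hu : u ∈ S)
    (h2 : ∃ c, Relation.ReflTransGen (fun x y => E x y ∧ y ∈ S) u c ∧ E c v) :
    ∃ c, Relation.ReflTransGen (fun x y => E x y ∧ y ∈ S) w c ∧ E c v := by
  obtain ⟨c1, r1, e1⟩ := h1
  obtain ⟨c2, r2, e2⟩ := h2
  exact ⟨c2, (r1.tail ⟨e1, hu⟩).trans r2, e2⟩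

private lemma margE_comm (hdisj : Disjoint U₁ U₂) :
    MargE (MargE E U₁) U₂ = MargE E (U₁ ∪ U₂) := by
  funext a b
  apply propext
  constructor
  · rintro ⟨ha2, hb2, d, hw, hdb⟩
    have hb1 : b ∉ U₁ := hdb.2.1
    have ha1 : a ∉ U₁ := by
      rcases hw.cases_head with h | ⟨c, hc, _⟩
      · exact h ▸ hdb.1
      · exact hc.1.1
    exact ⟨fun h => h.elim ha1 ha2, fun h => h.elim hb1 hb2, margRT_to_RT ⟨d, hw, hdb⟩⟩
  · rintro ⟨ha, hb, hrt⟩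
    have ha1 : a ∉ U₁ := fun h => ha (Or.inl h)
    have hb1 : b ∉ U₁ := fun h => hb (Or.inl h)
    obtain ⟨d, hw, hdb⟩ := RT_to_margRT hdisj ha1 hb1 hrt
    exact ⟨fun h => ha (Or.inr h), fun h => hb (Or.inr h), d, hw, hdb⟩

private lemma margH_comm {H : Set (Set V')} (hH : IsSimplicial H) (hdisj : Disjoint U₁ U₂) :
    MargH (MargE E U₁) (MargH E H U₁) U₂ = MargH E H (U₁ ∪ U₂) := by
  ext F'
  constructor
  · rintro ⟨hF'2, G, ⟨hG1, F, hF, hFsub, hGcond⟩, hGsub, hcond⟩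
    refine ⟨?_, F, hF, ?_, ?_⟩
    · intro v hv
      rcases hcond v hv with ⟨hvG, _⟩ | ⟨u, hu, hrt⟩
      · rintro (h1 | h2)
        · exact hG1 v hvG h1
        · exact hF'2 v hv h2
      · obtain ⟨d, _, hdb⟩ := hrt
        rintro (h1 | h2)
        · exact hdb.2.1 h1
        · exact hF'2 v hv h2
    · intro x hx
      rcases hFsub hx with hxG | hxU1
      · rcases hGsub hxG with h | h
        · exact Or.inl h
        · exact Or.inr (Or.inr h)
      · exact Or.inr (Or.inl hxU1)
    · intro v hv
      rcases hcond v hv with ⟨hvG, hv2⟩ | ⟨u, hu, hrt⟩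
      · rcases hGcond v hvG with ⟨hvF, hv1⟩ | ⟨u, hu, hrt⟩
        · exact Or.inl ⟨hvF, fun h => h.elim hv1 hv2⟩
        · refine Or.inr ⟨u, ⟨hu.1, Or.inl hu.2⟩, ?_⟩
          obtain ⟨c, r, e⟩ := hrt
          exact ⟨c, Relation.ReflTransGen.mono (fun x y h => ⟨h.1, Or.inl h.2⟩) _ _ r, e⟩
      · have hrtS : ∃ c, Relation.ReflTransGen (fun x y => E x y ∧ y ∈ U₁ ∪ U₂) u c ∧ E c v :=
          margRT_to_RT hrt
        rcases hGcond u hu.1 with ⟨huF, _⟩ | ⟨w, hw, hrtw⟩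
        · exact Or.inr ⟨u, ⟨huF, Or.inr hu.2⟩, hrtS⟩
        · refine Or.inr ⟨w, ⟨hw.1, Or.inl hw.2⟩, ?_⟩
          obtain ⟨c, r, e⟩ := hrtw
          exact RT_comp ⟨c, Relation.ReflTransGen.mono (fun x y h => ⟨h.1, Or.inl h.2⟩) _ _ r, e⟩ (Or.inr hu.2) hrtS
  · rintro ⟨hF'U, F, hF, hFsub, hcond⟩
    refine ⟨fun v hv h => hF'U v hv (Or.inr h),
      {v | v ∈ F' ∪ U₂ ∧ v ∉ U₁ ∧ (v ∈ F ∨ ∃ u ∈ F ∩ U₁,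
        ∃ c, Relation.ReflTransGen (fun x y => E x y ∧ y ∈ U₁) u c ∧ E c v)},
      ?_, fun v hv => hv.1, ?_⟩
    · refine ⟨fun v hv => hv.2.1, F ∩ ({v | v ∈ F' ∪ U₂ ∧ v ∉ U₁ ∧ (v ∈ F ∨ ∃ u ∈ F ∩ U₁,
        ∃ c, Relation.ReflTransGen (fun x y => E x y ∧ y ∈ U₁) u c ∧ E c v)} ∪ U₁),
        hH.2 F hF _ Set.inter_subset_left, Set.inter_subset_right, ?_⟩
      intro v hv
      rcases hv.2.2 with hvF | ⟨u, hu, hrt⟩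
      · exact Or.inl ⟨⟨hvF, Or.inl hv⟩, hv.2.1⟩
      · exact Or.inr ⟨u, ⟨⟨hu.1, Or.inr hu.2⟩, hu.2⟩, hrt⟩
    · intro v hv
      have hv1 : v ∉ U₁ := fun h => hF'U v hv (Or.inl h)
      have hv2 : v ∉ U₂ := fun h => hF'U v hv (Or.inr h)
      rcases hcond v hv with ⟨hvF, _⟩ | ⟨u, hu, hrt⟩
      · exact Or.inl ⟨⟨Or.inl hv, hv1, Or.inl hvF⟩, hv2⟩
      · rcases hu.2 with hu1 | hu2
        · obtain ⟨c, r, e⟩ := hrt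
          rcases first_entry r with hl | ⟨w, hw, hrtw, r2⟩
          · exact Or.inl ⟨⟨Or.inl hv, hv1, Or.inr ⟨u, ⟨hu.1, hu1⟩, c, hl, e⟩⟩, hv2⟩
          · have hw1 : w ∉ U₁ := fun h => Set.disjoint_left.mp hdisj h hw
            refine Or.inr ⟨w, ⟨⟨Or.inr hw, hw1, Or.inr ⟨u, ⟨hu.1, hu1⟩, hrtw⟩⟩, hw⟩, ?_⟩
            exact RT_to_margRT hdisj hw1 hv1 ⟨c, r2, e⟩
        · have hu1 : u ∉ U₁ := fun h => Set.disjoint_left.mp hdisj h hu2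
          refine Or.inr ⟨u, ⟨⟨Or.inr hu2, hu1, Or.inl hu.1⟩, hu2⟩, ?_⟩
          exact RT_to_margRT hdisj hu1 hv1 hrt

end Aux

/-- Marginalizations of a HEDG with respect to disjoint subsets
commute: `(G^{marg∖U₁})^{marg∖U₂} = G^{marg∖(U₁∪U₂)} = (G^{marg∖U₂})^{marg∖U₁}`,
both on the level of directed edges and of hyperedges. -/
theorem marginalizations_commute {V : Type*} [Fintype V]
    (E : V → V → Prop) (H : Set (Set V)) (hH : IsSimplicial H)
    (U₁ U₂ : Set V) (hdisj : Disjoint U₁ U₂) :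
    MargE (MargE E U₁) U₂ = MargE E (U₁ ∪ U₂) ∧
    MargE (MargE E U₂) U₁ = MargE E (U₁ ∪ U₂) ∧
    MargH (MargE E U₁) (MargH E H U₁) U₂ = MargH E H (U₁ ∪ U₂) ∧
    MargH (MargE E U₂) (MargH E H U₂) U₁ = MargH E H (U₁ ∪ U₂) := by
  refine ⟨margE_comm hdisj, ?_, margH_comm hH hdisj, ?_⟩
  · rw [Set.union_comm]; exact margE_comm hdisj.symm
  · rw [Set.union_comm]; exact margH_comm hH hdisj.symm

end HedgPaper
end

section
/- If A is an ancestral subset of a HEDG G (i.e., A = Anc^G(A)), then the induced sub-HEDG structure on A coincides with the marginalized HEDG structure on A: G(A) = G^{marg(A)}. -/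
namespace HedgPaper

variable {V : Type*}

/-- If `A` is an ancestral subset of a HEDG `G` (closed under taking
ancestors), then the induced sub-HEDG structure on `A` coincides with the marginalized
HEDG structure on `A`: same directed edges and same hyperedges. -/
theorem ancestral_induced_eq_marginalized {V : Type*} [Fintype V]
    (E : V → V → Prop) (H : Set (Set V)) (hH : IsSimplicial H)
    (A : Set V) (hanc : ∀ a ∈ A, ∀ u : V, Reach E u a → u ∈ A) :
    InducedE E A = MargE E Aᶜ ∧ InducedH H A = MargH E H Aᶜ := by
  have key : ∀ (u c : V), Relation.ReflTransGen (fun x y => E x y ∧ y ∈ Aᶜ) u c →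
      ∀ v, E c v → Reach E u v := by
    intro u c h v hcv
    exact Relation.ReflTransGen.tail
      (Relation.ReflTransGen.mono (fun x y (h : E x y ∧ y ∈ Aᶜ) => h.1) u c h) hcv
  constructor
  · funext a b
    ext
    constructor
    · rintro ⟨ha, hb, hab⟩
      exact ⟨fun h => h ha, fun h => h hb, a, Relation.ReflTransGen.refl, hab⟩
    · rintro ⟨ha, hb, c, hchain, hcb⟩
      simp only [Set.mem_compl_iff, not_not] at ha hb
      have hcA : c ∈ A := hanc b hb c (Relation.ReflTransGen.single hcb)
      rcases hchain.cases_tail with heq | ⟨d, _, hd⟩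
      · exact ⟨ha, hb, heq ▸ hcb⟩
      · exact absurd hcA hd.2
  · ext F'
    constructor
    · rintro ⟨hF'H, hF'A⟩
      refine ⟨fun v hv hvc => hvc (hF'A hv), F', hF'H, fun v hv => Or.inl hv,
        fun v hv => Or.inl ⟨hv, fun h => h (hF'A hv)⟩⟩
    · rintro ⟨hF'A, F, hFH, _, hFv⟩
      have hsub : F' ⊆ A := fun v hv => by
        have := hF'A v hv; simpa using this
      refine ⟨hH.2 F hFH F' ?_, hsub⟩
      intro v hv
      rcases hFv v hv with ⟨h, _⟩ | ⟨u, ⟨_, huU⟩, c, hchain, hcv⟩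
      · exact h
      · exact absurd (hanc v (hsub hv) u (key u c hchain v hcv)) huU


end HedgPaper
end

section
/- d-separation in a HEDG is stable under marginalization: for a HEDG G=(V,E,H) and subsets X,Y,Z,U ⊆ V with U ∩ (X∪Y∪Z) = ∅, X is d-separated from Y given Z in G if and only if X is d-separated from Y given Z in the marginalization G^{marg∖U}. -/
namespace HedgPaper

variable {V : Type*}

section Aux
open List

variable {E : V → V → Prop} {H : Set (Set V)} {Z U : Set V}

/-- the pair condition of d-open walks on two consecutive steps. -/
def PC (E : V → V → Prop) (Z : Set V) (s t : Step V) : Prop :=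
  ((s.HeadAtDst ∧ t.HeadAtSrc) → s.dst ∈ AncSet E Z) ∧
  (¬ (s.HeadAtDst ∧ t.HeadAtSrc) → s.dst ∉ Z)

lemma dInteriorOpen_iff_chain' :
    ∀ l : List (Step V), DInteriorOpen E Z l ↔ List.IsChain (PC E Z) l := by
  intro l
  induction l with
  | nil => simp [DInteriorOpen]
  | cons s l ih =>
    cases l with
    | nil => simp [DInteriorOpen]
    | cons t r =>
      rw [List.isChain_cons_cons]
      constructor
      · rintro ⟨h1, h2, h3⟩; exact ⟨⟨h1, h2⟩, ih.1 h3⟩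
      · rintro ⟨⟨h1, h2⟩, h3⟩; exact ⟨h1, h2, ih.2 h3⟩

lemma isWalk_append {l1 l2 : List (Step V)} {x m y : V}
    (h1 : IsWalk E H l1 x m) (h2 : IsWalk E H l2 m y) :
    IsWalk E H (l1 ++ l2) x y := by
  induction l1 generalizing x with
  | nil => cases h1; exact h2
  | cons s l ih => exact ⟨h1.1, h1.2.1, ih h1.2.2⟩

lemma isWalk_getLast {l : List (Step V)} {x y : V}
    (h : IsWalk E H l x y) : ∀ la ∈ l.getLast?, la.dst = y := by
  induction l generalizing x with
  | nil => simp
  | cons s l ih =>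
    cases l with
    | nil => cases h.2.2; simpa using rfl
    | cons t r =>
      rw [List.getLast?_cons_cons]
      exact ih h.2.2

lemma not_headAtSrc_fwd {s : Step V} (h : s.dir = .fwd) : ¬ s.HeadAtSrc := by
  simp [Step.HeadAtSrc, h]

lemma not_headAtDst_bwd {s : Step V} (h : s.dir = .bwd) : ¬ s.HeadAtDst := by
  simp [Step.HeadAtDst, h]

lemma headAtDst_of_fwd {s : Step V} (h : s.dir = .fwd) : s.HeadAtDst := Or.inl h
lemma headAtDst_of_bi {s : Step V} (h : s.dir = .bi) : s.HeadAtDst := Or.inr h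
lemma headAtSrc_of_bwd {s : Step V} (h : s.dir = .bwd) : s.HeadAtSrc := Or.inl h
lemma headAtSrc_of_bi {s : Step V} (h : s.dir = .bi) : s.HeadAtSrc := Or.inr h

lemma dir_fwd_of_not_headAtSrc {s : Step V} (h : ¬ s.HeadAtSrc) : s.dir = .fwd := by
  rcases hd : s.dir with _ | _ | _
  · rfl
  · exact absurd (Or.inl hd) h
  · exact absurd (Or.inr hd) h

/-- composing reflexive-transitive closures through an edge-to-path map. -/
lemma rtg_lift {r s : V → V → Prop} (h : ∀ a b, r a b → Relation.ReflTransGen s a b)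
    {a b : V} (hr : Relation.ReflTransGen r a b) : Relation.ReflTransGen s a b := by
  induction hr with
  | refl => exact Relation.ReflTransGen.refl
  | tail _ e ih => exact ih.trans (h _ _ e)

lemma margE_le_rtg {a b : V} (h : MargE E U a b) : Relation.ReflTransGen E a b := by
  obtain ⟨_, _, c, hc, hcb⟩ := h
  exact (rtg_lift (fun x y hxy => Relation.ReflTransGen.single hxy.1) hc).tail hcb

lemma ancSet_marg_sub : AncSet (MargE E U) Z ⊆ AncSet E Z := by
  rintro v ⟨z, hz, hreach⟩
  exact ⟨z, hz, rtg_lift (fun a b h => margE_le_rtg h) hreach⟩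

/-- contraction of directed reachability: reachability between non-`U` nodes
transfers to the marginalization. -/
lemma marg_reach {a b : V} (ha : a ∉ U) (hb : b ∉ U)
    (h : Relation.ReflTransGen E a b) : Relation.ReflTransGen (MargE E U) a b := by
  have key : ∀ c, Relation.ReflTransGen E a c →
      (c ∉ U → Relation.ReflTransGen (MargE E U) a c) ∧
      (c ∈ U → ∃ d, d ∉ U ∧ Relation.ReflTransGen (MargE E U) a d ∧
        Relation.ReflTransGen (fun x y => E x y ∧ y ∈ U) d c) := by
    intro c hc
    induction hc with
    | refl => exact ⟨fun _ => Relation.ReflTransGen.refl, fun hc => absurd hc ha⟩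
    | @tail c b' hac hcb' ih =>
      by_cases hc : c ∈ U
      · obtain ⟨d, hd, hd1, hd2⟩ := (ih.2) hc
        constructor
        · intro hb'
          exact hd1.tail ⟨hd, hb', c, hd2, hcb'⟩
        · intro hb'
          exact ⟨d, hd, hd1, hd2.tail ⟨hcb', hb'⟩⟩
      · constructor
        · intro hb'
          exact (ih.1 hc).tail ⟨hc, hb', c, Relation.ReflTransGen.refl, hcb'⟩
        · intro hb'
          exact ⟨c, hc, ih.1 hc, Relation.ReflTransGen.single ⟨hcb', hb'⟩⟩
  exact (key b h).1 hb

lemma anc_transfer (hZU : ∀ u ∈ U, u ∉ Z) {a : V} (ha : a ∉ U)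
    (h : a ∈ AncSet E Z) : a ∈ AncSet (MargE E U) Z := by
  obtain ⟨z, hz, hr⟩ := h
  exact ⟨z, hz, marg_reach ha (fun hu => hZU z hu hz) hr⟩

lemma valid_fwd {a b : V} (h : E a b) : (⟨a, .fwd, b⟩ : Step V).Valid E H := h
lemma valid_bwd {a b : V} (h : E b a) : (⟨a, .bwd, b⟩ : Step V).Valid E H := h
lemma valid_bi {a b : V} (hne : a ≠ b) (h : ({a, b} : Set V) ∈ H) :
    (⟨a, .bi, b⟩ : Step V).Valid E H := ⟨hne, h⟩

/-- non-collider pairs with non-`Z` junction node satisfy the pair condition. -/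
lemma pc_of_noncol {s t : Step V} (h1 : ¬ (s.HeadAtDst ∧ t.HeadAtSrc)) (h2 : s.dst ∉ Z) :
    PC E Z s t :=
  ⟨fun hc => absurd hc h1, fun _ => h2⟩

/-- strengthened pair condition used to assemble expansions. -/
def NPC (Z : Set V) (s t : Step V) : Prop := ¬ (s.HeadAtDst ∧ t.HeadAtSrc) ∧ s.dst ∉ Z

lemma chain_pc_of_npc {l : List (Step V)} (h : List.IsChain (NPC Z) l) :
    List.IsChain (PC E Z) l :=
  List.IsChain.imp (fun _ _ hst => pc_of_noncol hst.1 hst.2) h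

lemma chain_npc_allFwd {l : List (Step V)} (hd : ∀ s ∈ l, s.dir = .fwd)
    (hn : ∀ s ∈ l.dropLast, s.dst ∉ Z) : List.IsChain (NPC Z) l := by
  induction l with
  | nil => exact List.isChain_nil
  | cons s l ih =>
    cases l with
    | nil => simp
    | cons t r =>
      rw [List.isChain_cons_cons]
      refine ⟨⟨fun hc => not_headAtSrc_fwd (hd t (by simp)) hc.2, hn s (by simp)⟩, ?_⟩
      exact ih (fun u hu => hd u (by simp [hu])) (fun u hu => hn u (by
        simp only [List.dropLast_cons₂, List.mem_cons] at hu ⊢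
        exact Or.inr hu))

lemma chain_npc_allBwd {l : List (Step V)} (hd : ∀ s ∈ l, s.dir = .bwd)
    (hn : ∀ s ∈ l.dropLast, s.dst ∉ Z) : List.IsChain (NPC Z) l := by
  induction l with
  | nil => exact List.isChain_nil
  | cons s l ih =>
    cases l with
    | nil => simp
    | cons t r =>
      rw [List.isChain_cons_cons]
      refine ⟨⟨fun hc => not_headAtDst_bwd (hd s (by simp)) hc.1, hn s (by simp)⟩, ?_⟩
      exact ih (fun u hu => hd u (by simp [hu])) (fun u hu => hn u (by
        simp only [List.dropLast_cons₂, List.mem_cons] at hu ⊢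
        exact Or.inr hu))

/-- expansion of a marginal directed edge into a forward walk through `U`. -/
lemma fwdList {a c b : V}
    (h : Relation.ReflTransGen (fun x y => E x y ∧ y ∈ U) a c) (hcb : E c b) :
    ∃ l : List (Step V), l ≠ [] ∧ IsWalk E H l a b ∧ (∀ s ∈ l, s.dir = .fwd) ∧
      (∀ s ∈ l.dropLast, s.dst ∈ U) := by
  induction h using Relation.ReflTransGen.head_induction_on with
  | refl =>
    exact ⟨[⟨c, .fwd, b⟩], by simp, ⟨rfl, valid_fwd hcb, rfl⟩, by simp, by simp⟩
  | @head a w haw _ ih =>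
    obtain ⟨l, hne, hwalk, hdir, hU⟩ := ih
    refine ⟨⟨a, .fwd, w⟩ :: l, by simp, ⟨rfl, valid_fwd haw.1, hwalk⟩, ?_, ?_⟩
    · intro s hs
      rcases List.mem_cons.1 hs with hs | hs
      · rw [hs]
      · exact hdir s hs
    · intro s hs
      rw [List.dropLast_cons_of_ne_nil hne] at hs
      rcases List.mem_cons.1 hs with hs | hs
      · rw [hs]; exact haw.2
      · exact hU s hs

/-- expansion of a reversed marginal directed edge into a backward walk through `U`. -/
lemma bwdList {a c b : V}
    (h : Relation.ReflTransGen (fun x y => E x y ∧ y ∈ U) b c) (hca : E c a) :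
    ∃ l : List (Step V), l ≠ [] ∧ IsWalk E H l a b ∧ (∀ s ∈ l, s.dir = .bwd) ∧
      (∀ s ∈ l.dropLast, s.dst ∈ U) := by
  induction h using Relation.ReflTransGen.head_induction_on with
  | refl =>
    exact ⟨[⟨a, .bwd, c⟩], by simp, ⟨rfl, valid_bwd hca, rfl⟩, by simp, by simp⟩
  | @head b w hbw _ ih =>
    obtain ⟨l, hne, hwalk, hdir, hU⟩ := ih
    refine ⟨l ++ [⟨w, .bwd, b⟩], by simp, isWalk_append hwalk (show IsWalk E H [⟨w, .bwd, b⟩] w b from ⟨rfl, valid_bwd hbw.1, rfl⟩), ?_, ?_⟩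
    · rintro s hs
      rcases List.mem_append.1 hs with hs | hs
      · exact hdir s hs
      · simp only [List.mem_singleton] at hs; rw [hs]
    · intro s hs
      rw [List.dropLast_concat] at hs
      rw [← List.dropLast_append_getLast hne] at hs
      rcases List.mem_append.1 hs with hs | hs
      · exact hU s hs
      · simp only [List.mem_singleton] at hs
        have hlast := isWalk_getLast hwalk (l.getLast hne)
          (by simp [List.getLast?_eq_getLast hne])
        rw [hs, hlast]
        exact hbw.2

lemma headAtDst_of_mem_fwd_bi {l : List (Step V)} (h : ∀ u ∈ l, u.dir = .fwd ∨ u.dir = .bi)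
    {la : Step V} (hla : la ∈ l) : la.HeadAtDst := (h la hla).imp id id

lemma headAtSrc_of_mem_bwd_bi {l : List (Step V)} (h : ∀ u ∈ l, u.dir = .bwd ∨ u.dir = .bi)
    {la : Step V} (hla : la ∈ l) : la.HeadAtSrc := (h la hla).imp id id

/-- expansion of one marginal step into an open walk of the original HEDG. -/
lemma expand_step (hH : IsSimplicial H) (hZU : ∀ u ∈ U, u ∉ Z) (s : Step V)
    (hs : s.Valid (MargE E U) (MargH E H U)) :
    ∃ l : List (Step V), l ≠ [] ∧ IsWalk E H l s.src s.dst ∧ List.IsChain (PC E Z) l ∧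
      (∀ hd ∈ l.head?, (hd.HeadAtSrc ↔ s.HeadAtSrc)) ∧
      (∀ la ∈ l.getLast?, (la.HeadAtDst ↔ s.HeadAtDst)) := by
  obtain ⟨a, d, b⟩ := s
  cases d with
  | fwd =>
    obtain ⟨ha, hb, c, hpath, hcb⟩ := hs
    obtain ⟨l, hne, hwalk, hdir, hU⟩ := fwdList (H := H) hpath hcb
    refine ⟨l, hne, hwalk, chain_pc_of_npc (chain_npc_allFwd hdir
      (fun u hu => hZU _ (hU u hu))), ?_, ?_⟩
    · intro hd hhd
      exact iff_of_false (not_headAtSrc_fwd (hdir hd (List.mem_of_mem_head? hhd)))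
        (not_headAtSrc_fwd rfl)
    · intro la hla
      exact iff_of_true (headAtDst_of_fwd (hdir la (List.mem_of_mem_getLast? hla)))
        (headAtDst_of_fwd rfl)
  | bwd =>
    obtain ⟨hb, ha, c, hpath, hca⟩ := hs
    obtain ⟨l, hne, hwalk, hdir, hU⟩ := bwdList (H := H) hpath hca
    refine ⟨l, hne, hwalk, chain_pc_of_npc (chain_npc_allBwd hdir
      (fun u hu => hZU _ (hU u hu))), ?_, ?_⟩
    · intro hd hhd
      exact iff_of_true (headAtSrc_of_bwd (hdir hd (List.mem_of_mem_head? hhd)))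
        (headAtSrc_of_bwd rfl)
    · intro la hla
      exact iff_of_false (not_headAtDst_bwd (hdir la (List.mem_of_mem_getLast? hla)))
        (not_headAtDst_bwd rfl)
  | bi =>
    obtain ⟨hne, hnotU, F, hF, hsubF, hwit⟩ := hs
    have ha : a ∉ U := hnotU a (by simp)
    have hb : b ∉ U := hnotU b (by simp)
    have hsrcHAS : (⟨a, .bi, b⟩ : Step V).HeadAtSrc := headAtSrc_of_bi rfl
    have hdstHAD : (⟨a, .bi, b⟩ : Step V).HeadAtDst := headAtDst_of_bi rfl
    rcases hwit a (by simp) with ⟨haF, -⟩ | ⟨ua, hua, ca, hpa, hea⟩ <;>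
      rcases hwit b (by simp) with ⟨hbF, -⟩ | ⟨ub, hub, cb, hpb, heb⟩
    · -- both in F : single bidirected step
      refine ⟨[⟨a, .bi, b⟩], by simp, ⟨rfl, valid_bi hne (hH.2 F hF _ ?_), rfl⟩,
        List.isChain_singleton _, by simp, by simp⟩
      intro v hv
      rcases hv with hv | hv
      · exact hv ▸ haF
      · simp at hv; exact hv ▸ hbF
    · -- a ∈ F, b anchored at ub
      obtain ⟨r, hrne, hrwalk, hrdir, hrU⟩ := fwdList (H := H) hpb heb
      have haub : a ≠ ub := fun h => ha (h ▸ hub.2)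
      have hmemH : ({a, ub} : Set V) ∈ H := hH.2 F hF _ (by
        intro v hv
        rcases hv with hv | hv
        · exact hv ▸ haF
        · simp at hv; exact hv ▸ hub.1)
      refine ⟨⟨a, .bi, ub⟩ :: r, by simp, ⟨rfl, valid_bi haub hmemH, hrwalk⟩,
        chain_pc_of_npc (List.isChain_cons.2 ⟨?_, chain_npc_allFwd hrdir
          (fun u hu => hZU _ (hrU u hu))⟩), ?_, ?_⟩
      · intro y hy
        exact ⟨fun hc => not_headAtSrc_fwd (hrdir y (List.mem_of_mem_head? hy)) hc.2,
          hZU _ hub.2⟩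
      · intro hd hhd
        simp only [List.head?_cons, Option.mem_some_iff] at hhd
        exact iff_of_true (hhd ▸ headAtSrc_of_bi rfl) hsrcHAS
      · intro la hla
        refine iff_of_true (headAtDst_of_mem_fwd_bi ?_ (List.mem_of_mem_getLast? hla)) hdstHAD
        intro u hu
        rcases List.mem_cons.1 hu with hu | hu
        · exact Or.inr (by rw [hu])
        · exact Or.inl (hrdir u hu)
    · -- b ∈ F, a anchored at ua
      obtain ⟨r, hrne, hrwalk, hrdir, hrU⟩ := bwdList (H := H) hpa hea
      have hbua : ua ≠ b := fun h => hb (h ▸ hua.2)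
      have hmemH : ({ua, b} : Set V) ∈ H := hH.2 F hF _ (by
        intro v hv
        rcases hv with hv | hv
        · exact hv ▸ hua.1
        · simp at hv; exact hv ▸ hbF)
      have hlastua : ∀ la ∈ r.getLast?, la.dst = ua := isWalk_getLast hrwalk
      refine ⟨r ++ [⟨ua, .bi, b⟩], by simp,
        isWalk_append hrwalk (show IsWalk E H [⟨ua, .bi, b⟩] ua b from
          ⟨rfl, valid_bi hbua hmemH, rfl⟩),
        chain_pc_of_npc (List.isChain_append.2 ⟨chain_npc_allBwd hrdir
          (fun u hu => hZU _ (hrU u hu)), List.isChain_singleton _, ?_⟩), ?_, ?_⟩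
      · intro x hx y hy
        refine ⟨fun hc => not_headAtDst_bwd (hrdir x (List.mem_of_mem_getLast? hx)) hc.1, ?_⟩
        rw [hlastua x hx]
        exact hZU _ hua.2
      · intro hd hhd
        refine iff_of_true (headAtSrc_of_mem_bwd_bi ?_ (List.mem_of_mem_head? hhd)) hsrcHAS
        intro u hu
        rcases List.mem_append.1 hu with hu | hu
        · exact Or.inl (hrdir u hu)
        · simp at hu; exact Or.inr (by rw [hu])
      · intro la hla
        rw [List.getLast?_concat] at hla
        simp only [Option.mem_some_iff] at hla
        exact iff_of_true (hla ▸ headAtDst_of_bi rfl) hdstHAD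
    · -- both anchored
      obtain ⟨r, hrne, hrwalk, hrdir, hrU⟩ := bwdList (H := H) hpa hea
      obtain ⟨r', hrne', hrwalk', hrdir', hrU'⟩ := fwdList (H := H) hpb heb
      have hlastua : ∀ la ∈ r.getLast?, la.dst = ua := isWalk_getLast hrwalk
      by_cases huab : ua = ub
      · -- single turning node
        refine ⟨r ++ r', by simp [hrne], isWalk_append hrwalk (huab ▸ hrwalk'),
          chain_pc_of_npc (List.isChain_append.2 ⟨chain_npc_allBwd hrdir
            (fun u hu => hZU _ (hrU u hu)), chain_npc_allFwd hrdir'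
            (fun u hu => hZU _ (hrU' u hu)), ?_⟩), ?_, ?_⟩
        · intro x hx y hy
          refine ⟨fun hc => not_headAtDst_bwd (hrdir x (List.mem_of_mem_getLast? hx)) hc.1, ?_⟩
          rw [hlastua x hx]
          exact hZU _ hua.2
        · intro hd hhd
          rw [List.head?_append_of_ne_nil _ hrne] at hhd
          exact iff_of_true (headAtSrc_of_bwd (hrdir hd (List.mem_of_mem_head? hhd))) hsrcHAS
        · intro la hla
          rw [List.getLast?_append_of_ne_nil _ hrne'] at hla
          exact iff_of_true (headAtDst_of_fwd (hrdir' la (List.mem_of_mem_getLast? hla))) hdstHAD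
      · -- bidirected edge between the two anchors
        have hmemH : ({ua, ub} : Set V) ∈ H := hH.2 F hF _ (by
          intro v hv
          rcases hv with hv | hv
          · exact hv ▸ hua.1
          · simp at hv; exact hv ▸ hub.1)
        refine ⟨r ++ ⟨ua, .bi, ub⟩ :: r', by simp [hrne],
          isWalk_append hrwalk ⟨rfl, valid_bi huab hmemH, hrwalk'⟩,
          chain_pc_of_npc (List.isChain_append.2 ⟨chain_npc_allBwd hrdir
            (fun u hu => hZU _ (hrU u hu)), List.isChain_cons.2 ⟨?_, chain_npc_allFwd hrdir'
            (fun u hu => hZU _ (hrU' u hu))⟩, ?_⟩), ?_, ?_⟩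
        · intro y hy
          exact ⟨fun hc => not_headAtSrc_fwd (hrdir' y (List.mem_of_mem_head? hy)) hc.2,
            hZU _ hub.2⟩
        · intro x hx y hy
          refine ⟨fun hc => not_headAtDst_bwd (hrdir x (List.mem_of_mem_getLast? hx)) hc.1, ?_⟩
          rw [hlastua x hx]
          exact hZU _ hua.2
        · intro hd hhd
          rw [List.head?_append_of_ne_nil _ hrne] at hhd
          exact iff_of_true (headAtSrc_of_bwd (hrdir hd (List.mem_of_mem_head? hhd))) hsrcHAS
        · intro la hla
          rw [List.getLast?_append_of_ne_nil _
            (by simp : (⟨ua, .bi, ub⟩ :: r' : List (Step V)) ≠ [])] at hla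
          refine iff_of_true (headAtDst_of_mem_fwd_bi ?_ (List.mem_of_mem_getLast? hla)) hdstHAD
          intro u hu
          rcases List.mem_cons.1 hu with hu | hu
          · exact Or.inr (by rw [hu])
          · exact Or.inl (hrdir' u hu)

/-- expansion of a marginally open walk into an open walk of the original HEDG. -/
lemma expandWalk (hH : IsSimplicial H) (hZU : ∀ u ∈ U, u ∉ Z) :
    ∀ (l' : List (Step V)) (x y : V), IsWalk (MargE E U) (MargH E H U) l' x y →
      List.IsChain (PC (MargE E U) Z) l' →
      ∃ l : List (Step V), IsWalk E H l x y ∧ List.IsChain (PC E Z) l ∧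
        (∀ hd ∈ l.head?, ∃ hd' ∈ l'.head?, (hd.HeadAtSrc ↔ hd'.HeadAtSrc)) := by
  intro l'
  induction l' with
  | nil =>
    intro x y hw _
    exact ⟨[], hw, List.isChain_nil, by simp⟩
  | cons s rest ih =>
    intro x y hw hc
    obtain ⟨hsrc, hvalid, hwrest⟩ := hw
    obtain ⟨ls, hlsne, hlswalk, hlschain, hlshead, hlslast⟩ := expand_step hH hZU s hvalid
    obtain ⟨lr, hlrwalk, hlrchain, hlrhead⟩ := ih s.dst y hwrest (List.isChain_cons.1 hc).2
    refine ⟨ls ++ lr, isWalk_append (hsrc ▸ hlswalk) hlrwalk,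
      List.isChain_append.2 ⟨hlschain, hlrchain, ?_⟩, ?_⟩
    · intro x' hx' y' hy'
      have hx'dst : x'.dst = s.dst := isWalk_getLast hlswalk x' hx'
      have hx'HAD : x'.HeadAtDst ↔ s.HeadAtDst := hlslast x' hx'
      obtain ⟨hd', hhd', hiff⟩ := hlrhead y' hy'
      have hpc' : PC (MargE E U) Z s hd' := (List.isChain_cons.1 hc).1 hd' hhd'
      constructor
      · rintro ⟨h1, h2⟩
        rw [hx'dst]
        exact ancSet_marg_sub (hpc'.1 ⟨hx'HAD.1 h1, hiff.1 h2⟩)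
      · intro h
        rw [hx'dst]
        refine hpc'.2 (fun hcon => h ⟨hx'HAD.2 hcon.1, hiff.2 hcon.2⟩)
    · intro hd hhd
      rw [List.head?_append_of_ne_nil _ hlsne] at hhd
      exact ⟨s, by simp, hlshead hd hhd⟩

/-- no interior node in `U` is a collider. -/
def NUC (U : Set V) (s t : Step V) : Prop := s.dst ∈ U → ¬ (s.HeadAtDst ∧ t.HeadAtSrc)

/-- a detour walk from an ancestor of `Z` down to `Z` and back. -/
lemma detour (hZU : ∀ u ∈ U, u ∉ Z) {m : V} (hm : m ∈ AncSet E Z) (hmZ : m ∉ Z) :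
    ∃ d : List (Step V), d ≠ [] ∧ IsWalk E H d m m ∧ List.IsChain (PC E Z) d ∧
      List.IsChain (NUC U) d ∧
      (∀ hd ∈ d.head?, ¬ hd.HeadAtSrc) ∧ (∀ la ∈ d.getLast?, ¬ la.HeadAtDst) := by
  obtain ⟨z, hz, hreach⟩ := hm
  induction hreach using Relation.ReflTransGen.head_induction_on with
  | refl => exact absurd hz hmZ
  | @head a w haw hwz ih =>
    by_cases hw : w ∈ Z
    · refine ⟨[⟨a, .fwd, w⟩, ⟨w, .bwd, a⟩], by simp,
        ⟨rfl, valid_fwd haw, rfl, valid_bwd haw, rfl⟩, ?_, ?_, by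
          intro hd hhd
          simp only [List.head?_cons, Option.mem_some_iff] at hhd
          exact hhd ▸ not_headAtSrc_fwd rfl, by
          intro la hla
          simp only [List.getLast?_cons_cons, List.getLast?_singleton,
            Option.mem_some_iff] at hla
          exact hla ▸ not_headAtDst_bwd rfl⟩
      · exact List.isChain_cons_cons.2 ⟨⟨fun _ => ⟨w, hw, Relation.ReflTransGen.refl⟩,
          fun h => absurd ⟨Or.inl rfl, Or.inl rfl⟩ h⟩, List.isChain_singleton _⟩
      · exact List.isChain_cons_cons.2 ⟨fun hwU => absurd hw (hZU w hwU), List.isChain_singleton _⟩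
    · obtain ⟨d, hdne, hdwalk, hdchain, hdnuc, hdhead, hdlast⟩ := ih hw
      have hwa : IsWalk E H [⟨w, .bwd, a⟩] w a := ⟨rfl, valid_bwd haw, rfl⟩
      have hlastw : ∀ la ∈ d.getLast?, la.dst = w := isWalk_getLast hdwalk
      refine ⟨⟨a, .fwd, w⟩ :: (d ++ [⟨w, .bwd, a⟩]), by simp,
        ⟨rfl, valid_fwd haw, isWalk_append hdwalk hwa⟩, ?_, ?_, by
          intro hd hhd
          simp only [List.head?_cons, Option.mem_some_iff] at hhd
          exact hhd ▸ not_headAtSrc_fwd rfl, by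
          intro la hla
          rw [← List.cons_append, List.getLast?_concat] at hla
          simp only [Option.mem_some_iff] at hla
          exact hla ▸ not_headAtDst_bwd rfl⟩
      · refine List.isChain_cons.2 ⟨?_, List.isChain_append.2 ⟨hdchain,
          List.isChain_singleton _, ?_⟩⟩
        · intro y' hy'
          rw [List.head?_append_of_ne_nil _ hdne] at hy'
          exact pc_of_noncol (fun hc => hdhead y' hy' hc.2) hw
        · intro x' hx' y' hy'
          exact pc_of_noncol (fun hc => hdlast x' hx' hc.1) (hlastw x' hx' ▸ hw)
      · refine List.isChain_cons.2 ⟨?_, List.isChain_append.2 ⟨hdnuc,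
          List.isChain_singleton _, ?_⟩⟩
        · intro y' hy'
          rw [List.head?_append_of_ne_nil _ hdne] at hy'
          exact fun _ hc => hdhead y' hy' hc.2
        · intro x' hx' y' hy'
          exact fun _ hc => hdlast x' hx' hc.1

/-- transform an open walk so that no node of `U` is a collider on it. -/
lemma decollide (hZU : ∀ u ∈ U, u ∉ Z) :
    ∀ (l : List (Step V)) (x y : V), IsWalk E H l x y → List.IsChain (PC E Z) l →
      ∃ l₂ : List (Step V), IsWalk E H l₂ x y ∧ List.IsChain (PC E Z) l₂ ∧
        List.IsChain (NUC U) l₂ ∧ l₂.head? = l.head? := by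
  intro l
  induction l with
  | nil => intro x y hw _; exact ⟨[], hw, List.isChain_nil, List.isChain_nil, rfl⟩
  | cons s rest ih =>
    intro x y hw hc
    obtain ⟨hsrc, hvl, hwrest⟩ := hw
    cases rest with
    | nil =>
      exact ⟨[s], ⟨hsrc, hvl, hwrest⟩, List.isChain_singleton _, List.isChain_singleton _, rfl⟩
    | cons t r =>
      obtain ⟨l₂, hl₂walk, hl₂chain, hl₂nuc, hl₂head⟩ := ih s.dst y hwrest (List.isChain_cons_cons.1 hc).2
      have hpcst : PC E Z s t := (List.isChain_cons_cons.1 hc).1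
      by_cases hcol : s.dst ∈ U ∧ s.HeadAtDst ∧ t.HeadAtSrc
      · have hmZ : s.dst ∉ Z := hZU _ hcol.1
        obtain ⟨d, hdne, hdwalk, hdchain, hdnuc, hdhead, hdlast⟩ :=
          detour (H := H) hZU (hpcst.1 hcol.2) hmZ
        have hlastdst : ∀ la ∈ d.getLast?, la.dst = s.dst := isWalk_getLast hdwalk
        refine ⟨s :: (d ++ l₂), ⟨hsrc, hvl, isWalk_append hdwalk hl₂walk⟩, ?_, ?_, rfl⟩
        · refine List.isChain_cons.2 ⟨?_, List.isChain_append.2 ⟨hdchain, hl₂chain, ?_⟩⟩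
          · intro y' hy'
            rw [List.head?_append_of_ne_nil _ hdne] at hy'
            exact pc_of_noncol (fun hc' => hdhead y' hy' hc'.2) hmZ
          · intro x' hx' y' hy'
            exact pc_of_noncol (fun hc' => hdlast x' hx' hc'.1) (hlastdst x' hx' ▸ hmZ)
        · refine List.isChain_cons.2 ⟨?_, List.isChain_append.2 ⟨hdnuc, hl₂nuc, ?_⟩⟩
          · intro y' hy'
            rw [List.head?_append_of_ne_nil _ hdne] at hy'
            exact fun _ hc' => hdhead y' hy' hc'.2
          · intro x' hx' y' hy'
            exact fun _ hc' => hdlast x' hx' hc'.1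
      · refine ⟨s :: l₂, ⟨hsrc, hvl, hl₂walk⟩, ?_, ?_, rfl⟩
        · refine List.isChain_cons.2 ⟨?_, hl₂chain⟩
          intro y' hy'
          rw [hl₂head] at hy'
          simp only [List.head?_cons, Option.mem_some_iff] at hy'
          exact hy' ▸ hpcst
        · refine List.isChain_cons.2 ⟨?_, hl₂nuc⟩
          intro y' hy'
          rw [hl₂head] at hy'
          simp only [List.head?_cons, Option.mem_some_iff] at hy'
          intro h1 h2
          exact hcol ⟨h1, hy' ▸ h2⟩

lemma valid_elim_fwd {t : Step V} (hd : t.dir = .fwd) (h : t.Valid E H) : E t.src t.dst := by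
  obtain ⟨a, d, b⟩ := t; subst hd; exact h
lemma valid_elim_bwd {t : Step V} (hd : t.dir = .bwd) (h : t.Valid E H) : E t.dst t.src := by
  obtain ⟨a, d, b⟩ := t; subst hd; exact h
lemma valid_elim_bi {t : Step V} (hd : t.dir = .bi) (h : t.Valid E H) :
    t.src ≠ t.dst ∧ ({t.src, t.dst} : Set V) ∈ H := by
  obtain ⟨a, d, b⟩ := t; subst hd; exact h

/-- the invariant while chasing a run of `U`-nodes: `a` is the non-`U` entry node,
`HS` records whether the run starts with an arrowhead at `a`, and `s` is the
current (last processed) step, ending in `U`. -/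
def PreState (E : V → V → Prop) (H : Set (Set V)) (U : Set V) (a : V) (HS : Prop)
    (s : Step V) : Prop :=
  (s.dir = .fwd ∧ ¬ HS ∧ Relation.ReflTransGen (fun x y => E x y ∧ y ∈ U) a s.dst) ∨
  (s.dir = .bwd ∧ HS ∧ ∃ c, Relation.ReflTransGen (fun x y => E x y ∧ y ∈ U) s.dst c ∧ E c a) ∨
  ((s.dir = .fwd ∨ s.dir = .bi) ∧ HS ∧ ∃ F ∈ H, F ⊆ {a} ∪ U ∧
    (a ∈ F ∨ ∃ u ∈ F ∩ U, ∃ c, Relation.ReflTransGen (fun x y => E x y ∧ y ∈ U) u c ∧ E c a) ∧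
    ∃ u ∈ F ∩ U, Relation.ReflTransGen (fun x y => E x y ∧ y ∈ U) u s.dst)

/-- chasing a maximal run of `U`-nodes on a walk without `U`-colliders, producing the
single marginal step replacing it (or dropping it). -/
lemma runChase (hH : IsSimplicial H) :
    ∀ (l : List (Step V)) (s : Step V) (y a : V) (HS : Prop),
      IsWalk E H l s.dst y → List.IsChain (PC E Z) (s :: l) → List.IsChain (NUC U) (s :: l) →
      a ∉ U → s.dst ∈ U → y ∉ U → PreState E H U a HS s →
      ∃ (b : V) (rest₂ : List (Step V)), b ∉ U ∧ IsWalk E H rest₂ b y ∧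
        List.IsChain (PC E Z) rest₂ ∧ List.IsChain (NUC U) rest₂ ∧ rest₂.length ≤ l.length ∧
        ((∃ σ : Step V, σ.src = a ∧ σ.dst = b ∧ σ.Valid (MargE E U) (MargH E H U) ∧
            (σ.HeadAtSrc ↔ HS) ∧
            (∀ q ∈ rest₂.head?, (σ.HeadAtDst ∧ q.HeadAtSrc → b ∈ AncSet E Z) ∧
              (¬ (σ.HeadAtDst ∧ q.HeadAtSrc) → b ∉ Z))) ∨
          (a = b ∧ HS ∧ ∀ q ∈ rest₂.head?, ¬ q.HeadAtSrc → b ∉ Z)) := by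
  intro l
  induction l with
  | nil =>
    intro s y a HS hw _ _ _ hsU hyU _
    exact absurd (hw ▸ hsU) hyU
  | cons t rest ih =>
    intro s y a HS hw hpc hnuc haU hsU hyU hPre
    obtain ⟨htsrc, htval, hwrest⟩ := hw
    have hpcst : PC E Z s t := (List.isChain_cons_cons.1 hpc).1
    have hpcrest : List.IsChain (PC E Z) (t :: rest) := (List.isChain_cons_cons.1 hpc).2
    have hnucst : NUC U s t := (List.isChain_cons_cons.1 hnuc).1
    have hnucrest : List.IsChain (NUC U) (t :: rest) := (List.isChain_cons_cons.1 hnuc).2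
    by_cases hm' : t.dst ∈ U
    · -- still inside the run: build the invariant for `t` and recurse
      have hnewPre : PreState E H U a HS t := by
        rcases hPre with ⟨hdf, hHS, hrtg⟩ | ⟨hdb, hHS, c, hrtg, hca⟩ |
          ⟨hdfb, hHS, F, hF, hFsub, hAW, u, huFU, hrtg⟩
        · -- forward mode continues forward
          have htf : t.dir = .fwd := dir_fwd_of_not_headAtSrc
            (fun h => hnucst hsU ⟨headAtDst_of_fwd hdf, h⟩)
          exact Or.inl ⟨htf, hHS,
            hrtg.tail ⟨htsrc ▸ valid_elim_fwd htf htval, hm'⟩⟩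
        · -- backward mode: any direction may follow
          rcases ht : t.dir with _ | _ | _
          · -- turn without a bidirected edge
            refine Or.inr (Or.inr ⟨Or.inl ht, hHS, {s.dst}, hH.1 s.dst,
              fun v hv => Or.inr (hv ▸ hsU), Or.inr ⟨s.dst, ⟨rfl, hsU⟩, c, hrtg, hca⟩,
              s.dst, ⟨rfl, hsU⟩, Relation.ReflTransGen.single
                ⟨htsrc ▸ valid_elim_fwd ht htval, hm'⟩⟩)
          · -- continue backward
            exact Or.inr (Or.inl ⟨ht, hHS, c,
              (Relation.ReflTransGen.single
                ⟨htsrc ▸ valid_elim_bwd ht htval, hsU⟩).trans hrtg, hca⟩)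
          · -- bidirected edge inside the run
            obtain ⟨hnet, hmem⟩ := valid_elim_bi ht htval
            refine Or.inr (Or.inr ⟨Or.inr ht, hHS, {t.src, t.dst}, hmem, ?_,
              Or.inr ⟨t.src, ⟨Set.mem_insert _ _, htsrc ▸ hsU⟩, c, ?_, hca⟩,
              t.dst, ⟨by simp, hm'⟩, Relation.ReflTransGen.refl⟩)
            · intro v hv
              rcases hv with hv | hv
              · exact Or.inr (hv ▸ (htsrc ▸ hsU))
              · simp at hv; exact Or.inr (hv ▸ hm')
            · rw [htsrc]; exact hrtg
        · -- bidirected mode continues forward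
          have hsHAD : s.HeadAtDst := hdfb.imp id id
          have htf : t.dir = .fwd := dir_fwd_of_not_headAtSrc
            (fun h => hnucst hsU ⟨hsHAD, h⟩)
          exact Or.inr (Or.inr ⟨Or.inl htf, hHS, F, hF, hFsub, hAW, u, huFU,
            hrtg.tail ⟨htsrc ▸ valid_elim_fwd htf htval, hm'⟩⟩)
      obtain ⟨b, rest₂, hb, hwalk₂, hchain₂, hnuc₂, hlen₂, hres⟩ :=
        ih t y a HS hwrest hpcrest hnucrest haU hm' hyU hnewPre
      exact ⟨b, rest₂, hb, hwalk₂, hchain₂, hnuc₂, hlen₂.trans (Nat.le_succ _), hres⟩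
    · -- the run ends at `t.dst`
      refine ⟨t.dst, rest, hm', hwrest, (List.isChain_cons.1 hpcrest).2,
        (List.isChain_cons.1 hnucrest).2, Nat.le_succ _, ?_⟩
      have hRJ : ∀ q ∈ rest.head?, PC E Z t q := (List.isChain_cons.1 hpcrest).1
      rcases hPre with ⟨hdf, hHS, hrtg⟩ | ⟨hdb, hHS, c, hrtg, hca⟩ |
        ⟨hdfb, hHS, F, hF, hFsub, hAW, u, huFU, hrtg⟩
      · -- pure forward run
        have htf : t.dir = .fwd := dir_fwd_of_not_headAtSrc
          (fun h => hnucst hsU ⟨headAtDst_of_fwd hdf, h⟩)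
        refine Or.inl ⟨⟨a, .fwd, t.dst⟩, rfl, rfl,
          ⟨haU, hm', s.dst, hrtg, htsrc ▸ valid_elim_fwd htf htval⟩,
          iff_of_false (not_headAtSrc_fwd rfl) hHS, ?_⟩
        intro q hq
        exact ⟨fun hc => (hRJ q hq).1 ⟨headAtDst_of_fwd htf, hc.2⟩,
          fun hc => (hRJ q hq).2 (fun hcon => hc ⟨headAtDst_of_fwd rfl, hcon.2⟩)⟩
      · -- backward mode ends
        rcases ht : t.dir with _ | _ | _
        · -- turn and exit immediately: bidirected marginal edge via singleton {s.dst}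
          by_cases hab : a = t.dst
          · exact Or.inr ⟨hab, hHS, fun q hq hqs =>
              (hRJ q hq).2 (fun hcon => hqs hcon.2)⟩
          refine Or.inl ⟨⟨a, .bi, t.dst⟩, rfl, rfl, ⟨hab, ?_⟩,
            iff_of_true (headAtSrc_of_bi rfl) hHS, ?_⟩
          · refine ⟨?_, {s.dst}, hH.1 s.dst, fun v hv => Or.inr (hv ▸ hsU), ?_⟩
            · intro v hv
              rcases hv with hv | hv
              · exact hv ▸ haU
              · simp at hv; exact hv ▸ hm'
            · intro v hv
              rcases hv with hv | hv
              · exact Or.inr ⟨s.dst, ⟨rfl, hsU⟩, c, hrtg, hv ▸ hca⟩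
              · simp at hv
                exact Or.inr ⟨s.dst, ⟨rfl, hsU⟩, s.dst, Relation.ReflTransGen.refl,
                  hv ▸ (htsrc ▸ valid_elim_fwd ht htval)⟩
          · intro q hq
            exact ⟨fun hc => (hRJ q hq).1 ⟨headAtDst_of_fwd ht, hc.2⟩,
              fun hc => (hRJ q hq).2 (fun hcon => hc ⟨headAtDst_of_bi rfl, hcon.2⟩)⟩
        · -- pure backward run
          refine Or.inl ⟨⟨a, .bwd, t.dst⟩, rfl, rfl,
            ⟨hm', haU, c, (Relation.ReflTransGen.single
              ⟨htsrc ▸ valid_elim_bwd ht htval, hsU⟩).trans hrtg, hca⟩,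
            iff_of_true (headAtSrc_of_bwd rfl) hHS, ?_⟩
          intro q hq
          exact ⟨fun hc => absurd hc.1 (not_headAtDst_bwd rfl),
            fun _ => (hRJ q hq).2 (fun hcon => (not_headAtDst_bwd ht) hcon.1)⟩
        · -- final bidirected edge out of the run
          obtain ⟨hnet, hmem⟩ := valid_elim_bi ht htval
          by_cases hab : a = t.dst
          · exact Or.inr ⟨hab, hHS, fun q hq hqs =>
              (hRJ q hq).2 (fun hcon => hqs hcon.2)⟩
          refine Or.inl ⟨⟨a, .bi, t.dst⟩, rfl, rfl, ⟨hab, ?_⟩,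
            iff_of_true (headAtSrc_of_bi rfl) hHS, ?_⟩
          · refine ⟨?_, {t.src, t.dst}, hmem, ?_, ?_⟩
            · intro v hv
              rcases hv with hv | hv
              · exact hv ▸ haU
              · simp at hv; exact hv ▸ hm'
            · intro v hv
              rcases hv with hv | hv
              · exact Or.inr (hv ▸ (htsrc ▸ hsU))
              · simp at hv; exact Or.inl (by simp [hv])
            · intro v hv
              rcases hv with hv | hv
              · refine Or.inr ⟨t.src, ⟨Set.mem_insert _ _, htsrc ▸ hsU⟩, c, ?_, hv ▸ hca⟩
                rw [htsrc]; exact hrtg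
              · simp at hv
                exact Or.inl ⟨by simp [hv], hv ▸ hm'⟩
          · intro q hq
            exact ⟨fun hc => (hRJ q hq).1 ⟨headAtDst_of_bi ht, hc.2⟩,
              fun hc => (hRJ q hq).2 (fun hcon => hc ⟨headAtDst_of_bi rfl, hcon.2⟩)⟩
      · -- bidirected mode ends with a forward step
        have hsHAD : s.HeadAtDst := hdfb.imp id id
        have htf : t.dir = .fwd := dir_fwd_of_not_headAtSrc
          (fun h => hnucst hsU ⟨hsHAD, h⟩)
        by_cases hab : a = t.dst
        · exact Or.inr ⟨hab, hHS, fun q hq hqs =>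
            (hRJ q hq).2 (fun hcon => hqs hcon.2)⟩
        refine Or.inl ⟨⟨a, .bi, t.dst⟩, rfl, rfl, ⟨hab, ?_⟩,
          iff_of_true (headAtSrc_of_bi rfl) hHS, ?_⟩
        · refine ⟨?_, F, hF, ?_, ?_⟩
          · intro v hv
            rcases hv with hv | hv
            · exact hv ▸ haU
            · simp at hv; exact hv ▸ hm'
          · intro v hv
            rcases hFsub hv with hv' | hv'
            · exact Or.inl (Or.inl hv')
            · exact Or.inr hv'
          · intro v hv
            rcases hv with hv | hv
            · subst hv
              rcases hAW with hAW | hAW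
              · exact Or.inl ⟨hAW, haU⟩
              · exact Or.inr hAW
            · simp at hv
              exact Or.inr ⟨u, huFU, s.dst, hrtg, hv ▸ (htsrc ▸ valid_elim_fwd htf htval)⟩
        · intro q hq
          exact ⟨fun hc => (hRJ q hq).1 ⟨headAtDst_of_fwd htf, hc.2⟩,
            fun hc => (hRJ q hq).2 (fun hcon => hc ⟨headAtDst_of_bi rfl, hcon.2⟩)⟩

/-- a step between non-`U` nodes is valid in the marginalization. -/
lemma step_valid_marg {s : Step V} (hval : s.Valid E H) (h1 : s.src ∉ U) (h2 : s.dst ∉ U) :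
    s.Valid (MargE E U) (MargH E H U) := by
  obtain ⟨src, d, dst⟩ := s
  cases d with
  | fwd => exact ⟨h1, h2, src, Relation.ReflTransGen.refl, hval⟩
  | bwd => exact ⟨h2, h1, dst, Relation.ReflTransGen.refl, hval⟩
  | bi =>
    obtain ⟨hne, hmem⟩ := hval
    simp only [Step.Valid]
    refine ⟨hne, ?_, {src, dst}, hmem, fun v hv => Or.inl hv, ?_⟩
    · intro v hv
      rcases hv with hv | hv
      · exact hv ▸ h1
      · simp at hv; exact hv ▸ h2
    · intro v hv
      rcases hv with hv | hv
      · exact Or.inl ⟨hv ▸ Set.mem_insert _ _, hv ▸ h1⟩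
      · simp at hv; exact Or.inl ⟨by simp [hv], hv ▸ h2⟩

/-- contraction of an open walk without `U`-colliders to a marginally open walk. -/
lemma contract (hH : IsSimplicial H) (hZU : ∀ u ∈ U, u ∉ Z) :
    ∀ (n : ℕ) (l : List (Step V)) (x y : V), l.length ≤ n → IsWalk E H l x y →
      List.IsChain (PC E Z) l → List.IsChain (NUC U) l → x ∉ U → y ∉ U →
      ∃ l' : List (Step V), IsWalk (MargE E U) (MargH E H U) l' x y ∧
        List.IsChain (PC (MargE E U) Z) l' ∧
        ∀ hd' ∈ l'.head?, ∃ hd ∈ l.head?,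
          ((hd'.HeadAtSrc ↔ hd.HeadAtSrc) ∨ (hd.HeadAtSrc ∧ (¬ hd'.HeadAtSrc → x ∉ Z))) := by
  intro n
  induction n with
  | zero =>
    intro l x y hlen hw _ _ _ _
    rw [Nat.le_zero, List.length_eq_zero_iff] at hlen
    subst hlen
    exact ⟨[], hw, List.isChain_nil, by simp⟩
  | succ n ihn =>
    intro l x y hlen hw hc hnuc hxU hyU
    cases l with
    | nil => exact ⟨[], hw, List.isChain_nil, by simp⟩
    | cons s tail =>
      obtain ⟨hsrc, hval, hwtail⟩ := hw
      have hlen' : tail.length ≤ n := Nat.succ_le_succ_iff.1 hlen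
      by_cases hm : s.dst ∈ U
      · -- the walk enters a `U`-run
        have hPre : PreState E H U x s.HeadAtSrc s := by
          rcases hd : s.dir with _ | _ | _
          · exact Or.inl ⟨hd, not_headAtSrc_fwd hd,
              Relation.ReflTransGen.single ⟨hsrc ▸ valid_elim_fwd hd hval, hm⟩⟩
          · exact Or.inr (Or.inl ⟨hd, headAtSrc_of_bwd hd, s.dst,
              Relation.ReflTransGen.refl, hsrc ▸ valid_elim_bwd hd hval⟩)
          · obtain ⟨hne, hmem⟩ := valid_elim_bi hd hval
            refine Or.inr (Or.inr ⟨Or.inr hd, headAtSrc_of_bi hd, {s.src, s.dst}, hmem,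
              ?_, Or.inl (hsrc ▸ Set.mem_insert _ _),
              s.dst, ⟨by simp, hm⟩, Relation.ReflTransGen.refl⟩)
            intro v hv
            rcases hv with hv | hv
            · exact Or.inl (by simp [hv, hsrc.symm])
            · simp at hv; exact Or.inr (hv ▸ hm)
        obtain ⟨b, rest₂, hb, hw₂, hchain₂, hnuc₂, hlen₂, hres⟩ :=
          runChase hH tail s y x s.HeadAtSrc hwtail hc hnuc hxU hm hyU hPre
        obtain ⟨rest₂', hw', hchain', hspec'⟩ :=
          ihn rest₂ b y (hlen₂.trans hlen') hw₂ hchain₂ hnuc₂ hb hyU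
        rcases hres with ⟨σ, hσsrc, hσdst, hσval, hσHS, hσRJ⟩ | ⟨hab, hHS, hdropRJ⟩
        · refine ⟨σ :: rest₂', ⟨hσsrc, hσval, hσdst ▸ hw'⟩,
            List.isChain_cons.2 ⟨?_, hchain'⟩, ?_⟩
          · intro hd' hhd'
            obtain ⟨q, hq, hcase⟩ := hspec' hd' hhd'
            have hRJq := hσRJ q hq
            constructor
            · rintro ⟨h1, h2⟩
              have hqHAS : q.HeadAtSrc := hcase.elim (fun hiff => hiff.mp h2) (fun hc' => hc'.1)
              rw [hσdst]
              exact anc_transfer hZU hb (hRJq.1 ⟨h1, hqHAS⟩)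
            · intro h
              rw [hσdst]
              by_cases hσH : σ.HeadAtDst
              · have hnd' : ¬ hd'.HeadAtSrc := fun h' => h ⟨hσH, h'⟩
                rcases hcase with hiff | ⟨_, himp⟩
                · exact hRJq.2 (fun hcon => hnd' (hiff.mpr hcon.2))
                · exact himp hnd'
              · exact hRJq.2 (fun hcon => hσH hcon.1)
          · intro hd' hhd'
            simp only [List.head?_cons, Option.mem_some_iff] at hhd'
            exact ⟨s, by simp, Or.inl (hhd' ▸ hσHS)⟩
        · refine ⟨rest₂', hab ▸ hw', hchain', ?_⟩
          intro hd' hhd'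
          obtain ⟨q, hq, hcase⟩ := hspec' hd' hhd'
          refine ⟨s, by simp, Or.inr ⟨hHS, ?_⟩⟩
          intro hnot
          rw [hab]
          rcases hcase with hiff | ⟨_, himp⟩
          · exact hdropRJ q hq (fun hq' => hnot (hiff.mpr hq'))
          · exact himp hnot
      · -- the first step stays outside `U`
        obtain ⟨rest', hw', hchain', hspec'⟩ := ihn tail s.dst y hlen' hwtail
          (List.isChain_cons.1 hc).2 (List.isChain_cons.1 hnuc).2 hm hyU
        refine ⟨s :: rest', ⟨hsrc, step_valid_marg hval (hsrc ▸ hxU) hm, hw'⟩,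
          List.isChain_cons.2 ⟨?_, hchain'⟩, ?_⟩
        · intro hd' hhd'
          obtain ⟨q, hq, hcase⟩ := hspec' hd' hhd'
          have hPCsq : PC E Z s q := (List.isChain_cons.1 hc).1 q hq
          constructor
          · rintro ⟨h1, h2⟩
            have hqHAS : q.HeadAtSrc := hcase.elim (fun hiff => hiff.mp h2) (fun hc' => hc'.1)
            exact anc_transfer hZU hm (hPCsq.1 ⟨h1, hqHAS⟩)
          · intro h
            by_cases hσH : s.HeadAtDst
            · have hnd' : ¬ hd'.HeadAtSrc := fun h' => h ⟨hσH, h'⟩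
              rcases hcase with hiff | ⟨_, himp⟩
              · exact hPCsq.2 (fun hcon => hnd' (hiff.mpr hcon.2))
              · exact himp hnd'
            · exact hPCsq.2 (fun hcon => hσH hcon.1)
        · intro hd' hhd'
          simp only [List.head?_cons, Option.mem_some_iff] at hhd'
          exact ⟨s, by simp, Or.inl (by rw [hhd'])⟩

end Aux

/-- d-separation in a HEDG is stable under marginalization: for
`U ∩ (X ∪ Y ∪ Z) = ∅`, `X ⟂_G^d Y | Z` iff `X ⟂_{G^{marg∖U}}^d Y | Z`. -/
theorem dSep_marginalization {V : Type*} [Fintype V]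
    (E : V → V → Prop) (H : Set (Set V)) (hH : IsSimplicial H)
    (X Y Z U : Set V) (hU : U ∩ (X ∪ Y ∪ Z) = ∅) :
    DSep E H X Y Z ↔ DSep (MargE E U) (MargH E H U) X Y Z := by
  have hUdisj : ∀ v ∈ U, v ∉ X ∪ Y ∪ Z := fun v hv hmem =>
    Set.eq_empty_iff_forall_notMem.1 hU v ⟨hv, hmem⟩
  have hZU : ∀ u ∈ U, u ∉ Z := fun u hu hz => hUdisj u hu (Or.inr hz)
  have hXU : ∀ x ∈ X, x ∉ U := fun x hx hu => hUdisj x hu (Or.inl (Or.inl hx))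
  have hYU : ∀ y ∈ Y, y ∉ U := fun y hy hu => hUdisj y hu (Or.inl (Or.inr hy))
  constructor
  · intro hsep x hx y hy l' hw' hcon
    obtain ⟨hxZ, hyZ, hio⟩ := hcon
    obtain ⟨l, hw, hchain, -⟩ := expandWalk hH hZU l' x y hw'
      ((dInteriorOpen_iff_chain' _).1 hio)
    exact hsep x hx y hy l hw ⟨hxZ, hyZ, (dInteriorOpen_iff_chain' _).2 hchain⟩
  · intro hsep x hx y hy l hw hcon
    obtain ⟨hxZ, hyZ, hio⟩ := hcon
    obtain ⟨l₂, hw₂, hchain₂, hnuc₂, -⟩ := decollide hZU l x y hw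
      ((dInteriorOpen_iff_chain' _).1 hio)
    obtain ⟨l', hw', hchain', -⟩ := contract hH hZU l₂.length l₂ x y le_rfl hw₂ hchain₂ hnuc₂
      (hXU x hx) (hYU y hy)
    exact hsep x hx y hy l' hw' ⟨hxZ, hyZ, (dInteriorOpen_iff_chain' _).2 hchain'⟩

end HedgPaper
end

section
/- d-separation in a HEDG G is equivalent to d-separation in its augmented directed graph G^aug: for subsets X,Y,Z ⊆ V, X ⟂_G^d Y | Z if and only if X ⟂_{G^aug}^d Y | Z. -/
namespace HedgPaper

variable {V : Type*}

/-! ### Auxiliary machinery for Statement 5 -/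

/-- node type of the augmented graph. -/
abbrev AugV (V : Type*) (H : Set (Set V)) : Type _ :=
  V ⊕ {F : Set V // MaximalHyperedge H F}

/-- openness of a walk continuation `l` starting at node `v`, where the proposition `D`
records whether the incoming step has an arrowhead at `v`. -/
def OpenFrom (E : V → V → Prop) (Z : Set V) (D : Prop) (v : V) : List (Step V) → Prop
  | [] => True
  | t :: l => ((D ∧ t.HeadAtSrc) → v ∈ AncSet E Z) ∧ (¬ (D ∧ t.HeadAtSrc) → v ∉ Z) ∧
      DInteriorOpen E Z (t :: l)

lemma openFrom_nil {E : V → V → Prop} {Z : Set V} {D : Prop} {v : V} :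
    OpenFrom E Z D v [] := trivial

lemma openFrom_cons {E : V → V → Prop} {Z : Set V} {D : Prop} {v : V} {t : Step V}
    {l : List (Step V)} :
    OpenFrom E Z D v (t :: l) ↔
      (((D ∧ t.HeadAtSrc) → v ∈ AncSet E Z) ∧ (¬ (D ∧ t.HeadAtSrc) → v ∉ Z) ∧
        DInteriorOpen E Z (t :: l)) := Iff.rfl

lemma dio_cons (E : V → V → Prop) (Z : Set V) (s : Step V) (l : List (Step V)) :
    DInteriorOpen E Z (s :: l) ↔ OpenFrom E Z s.HeadAtDst s.dst l := by
  cases l with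
  | nil => simp [DInteriorOpen, OpenFrom]
  | cons t l => exact Iff.rfl

lemma openFrom_congr {E : V → V → Prop} {Z : Set V} {D D' : Prop} (h : D ↔ D')
    {v : V} {l : List (Step V)} : OpenFrom E Z D v l ↔ OpenFrom E Z D' v l := by
  cases l with
  | nil => exact Iff.rfl
  | cons t l => simp only [OpenFrom, h]

lemma dio_of_openFrom {E : V → V → Prop} {Z : Set V} {D : Prop} {v : V}
    {l : List (Step V)} (h : OpenFrom E Z D v l) : DInteriorOpen E Z l := by
  cases l with
  | nil => trivial
  | cons t l => exact h.2.2

lemma openFrom_false {E : V → V → Prop} {Z : Set V} {v : V} {l : List (Step V)}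
    (hv : v ∉ Z) (h : DInteriorOpen E Z l) : OpenFrom E Z False v l := by
  cases l with
  | nil => trivial
  | cons t l => exact ⟨fun hc => hc.1.elim, fun _ => hv, h⟩

lemma exists_maximal_hyperedge {V : Type*} [Fintype V] {H : Set (Set V)} {F : Set V}
    (hF : F ∈ H) : ∃ M, MaximalHyperedge H M ∧ F ⊆ M := by
  obtain ⟨M, hM, hmax⟩ := Set.Finite.exists_maximalFor id {F' | F' ∈ H ∧ F ⊆ F'}
    (Set.toFinite _) ⟨F, hF, subset_refl F⟩
  exact ⟨M, ⟨hM.1, fun F' hF' hMF' => Set.Subset.antisymm (hmax ⟨hF', hM.2.trans hMF'⟩ hMF') hMF'⟩, hM.2⟩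

lemma inl_mem_image_iff {H : Set (Set V)} {Z : Set V} {x : V} :
    (Sum.inl x ∈ (Sum.inl '' Z : Set (AugV V H))) ↔ x ∈ Z :=
  Sum.inl_injective.mem_set_image

lemma aug_reach_inl {E : V → V → Prop} {H : Set (Set V)} {v : V} {b : AugV V H}
    (h : Reach (AugE E H) (Sum.inl v) b) : ∃ z, b = Sum.inl z ∧ Reach E v z := by
  induction h with
  | refl => exact ⟨v, rfl, Relation.ReflTransGen.refl⟩
  | tail hr hstep ih =>
      obtain ⟨u, rfl, hu⟩ := ih
      rename_i b'
      cases b' with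
      | inl w => exact ⟨w, rfl, hu.tail hstep⟩
      | inr F => exact (hstep : False).elim

lemma reach_aug_of_reach {E : V → V → Prop} {H : Set (Set V)} {v z : V}
    (h : Reach E v z) : Reach (AugE E H) (Sum.inl v) (Sum.inl z : AugV V H) := by
  induction h with
  | refl => exact Relation.ReflTransGen.refl
  | tail _ hstep ih => exact ih.tail hstep

lemma aug_ancSet_iff {E : V → V → Prop} {H : Set (Set V)} {Z : Set V} {v : V} :
    (Sum.inl v ∈ AncSet (AugE E H) (Sum.inl '' Z : Set (AugV V H))) ↔ v ∈ AncSet E Z := by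
  constructor
  · rintro ⟨_, ⟨z, hz, rfl⟩, hr⟩
    obtain ⟨u, hu, hr'⟩ := aug_reach_inl hr
    obtain rfl : z = u := Sum.inl_injective hu
    exact ⟨z, hz, hr'⟩
  · rintro ⟨z, hz, hr⟩
    exact ⟨Sum.inl z, ⟨z, hz, rfl⟩, reach_aug_of_reach hr⟩

lemma walk_to_aug {V : Type*} [Fintype V] {E : V → V → Prop} {H : Set (Set V)}
    (hH : IsSimplicial H) (Z : Set V) :
    ∀ (l : List (Step V)) (x y : V), IsWalk E H l x y →
      ∃ l' : List (Step (AugV V H)),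
        IsWalk (AugE E H) (TrivialH (AugV V H)) l' (.inl x) (.inl y) ∧
        ∀ D : Prop, OpenFrom E Z D x l →
          OpenFrom (AugE E H) (Sum.inl '' Z) D (.inl x) l' := by
  intro l
  induction l with
  | nil =>
      rintro x y rfl
      exact ⟨[], rfl, fun D _ => trivial⟩
  | cons s rest ih =>
      intro x y h
      obtain ⟨a, d, b⟩ := s
      obtain ⟨rfl, hval, hrest⟩ := h
      obtain ⟨lrec, hwrec, hopenrec⟩ := ih b y hrest
      cases d with
      | fwd =>
          refine ⟨⟨.inl a, .fwd, .inl b⟩ :: lrec, ⟨rfl, hval, hwrec⟩, ?_⟩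
          intro D hopen
          obtain ⟨h1, h2, h3⟩ := hopen
          refine ⟨fun hD => aug_ancSet_iff.mpr (h1 hD),
            fun hD hm => h2 hD (inl_mem_image_iff.mp hm), ?_⟩
          rw [dio_cons]
          exact hopenrec _ ((dio_cons _ _ _ _).mp h3)
      | bwd =>
          refine ⟨⟨.inl a, .bwd, .inl b⟩ :: lrec, ⟨rfl, hval, hwrec⟩, ?_⟩
          intro D hopen
          obtain ⟨h1, h2, h3⟩ := hopen
          refine ⟨fun hD => aug_ancSet_iff.mpr (h1 hD),
            fun hD hm => h2 hD (inl_mem_image_iff.mp hm), ?_⟩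
          rw [dio_cons]
          exact hopenrec _ ((dio_cons _ _ _ _).mp h3)
      | bi =>
          obtain ⟨hne, hmem⟩ := hval
          obtain ⟨M, hM, hsub⟩ := exists_maximal_hyperedge hmem
          refine ⟨⟨.inl a, .bwd, .inr ⟨M, hM⟩⟩ :: ⟨.inr ⟨M, hM⟩, .fwd, .inl b⟩ :: lrec,
            ⟨rfl, ?_, rfl, ?_, hwrec⟩, ?_⟩
          · exact hsub (Set.mem_insert _ _)
          · exact hsub (Set.mem_insert_of_mem _ rfl)
          · intro D hopen
            obtain ⟨h1, h2, h3⟩ := hopen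
            refine ⟨fun hD => aug_ancSet_iff.mpr (h1 ⟨hD.1, Or.inr rfl⟩),
              fun hD hm => h2 (fun hc => hD ⟨hc.1, Or.inl rfl⟩) (inl_mem_image_iff.mp hm),
              ?_, ?_, ?_⟩
            · rintro ⟨(h | h), -⟩ <;> exact EDir.noConfusion h
            · rintro - ⟨z, -, hz⟩
              exact Sum.inl_ne_inr hz
            · rw [dio_cons]
              have h4 : OpenFrom E Z True b rest :=
                (openFrom_congr (by simp [Step.HeadAtDst])).mp ((dio_cons _ _ _ _).mp h3)
              exact (openFrom_congr (by simp [Step.HeadAtDst])).mpr (hopenrec True h4)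

lemma walk_from_aug {V : Type*} [Fintype V] {E : V → V → Prop} {H : Set (Set V)}
    (hH : IsSimplicial H) (Z : Set V) :
    ∀ (n : ℕ) (l' : List (Step (AugV V H))), l'.length ≤ n → ∀ (x y : V),
      IsWalk (AugE E H) (TrivialH (AugV V H)) l' (.inl x) (.inl y) →
      ∃ l : List (Step V), IsWalk E H l x y ∧
        ∀ D : Prop, OpenFrom (AugE E H) (Sum.inl '' Z) D (.inl x) l' →
          OpenFrom E Z D x l := by
  intro n
  induction n with
  | zero =>
      intro l' hl x y hw
      cases l' with
      | nil => exact ⟨[], Sum.inl_injective hw, fun D _ => trivial⟩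
      | cons s rest => simp at hl
  | succ n ih =>
      intro l' hl x y hw
      cases l' with
      | nil => exact ⟨[], Sum.inl_injective hw, fun D _ => trivial⟩
      | cons s' rest =>
        obtain ⟨a', d', b'⟩ := s'
        obtain ⟨rfl, hval, hrest⟩ := hw
        cases b' with
        | inl b =>
            cases d' with
            | fwd =>
                obtain ⟨lrec, hwrec, hopenrec⟩ :=
                  ih rest (by simpa using Nat.le_of_succ_le_succ (by simpa using hl)) b y hrest
                refine ⟨⟨x, .fwd, b⟩ :: lrec, ⟨rfl, hval, hwrec⟩, ?_⟩
                intro D hopen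
                obtain ⟨h1, h2, h3⟩ := hopen
                refine ⟨fun hD => aug_ancSet_iff.mp (h1 hD),
                  fun hD hm => h2 hD (inl_mem_image_iff.mpr hm), ?_⟩
                rw [dio_cons]
                exact hopenrec _ ((dio_cons _ _ _ _).mp h3)
            | bwd =>
                obtain ⟨lrec, hwrec, hopenrec⟩ :=
                  ih rest (by simpa using Nat.le_of_succ_le_succ (by simpa using hl)) b y hrest
                refine ⟨⟨x, .bwd, b⟩ :: lrec, ⟨rfl, hval, hwrec⟩, ?_⟩
                intro D hopen
                obtain ⟨h1, h2, h3⟩ := hopen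
                refine ⟨fun hD => aug_ancSet_iff.mp (h1 hD),
                  fun hD hm => h2 hD (inl_mem_image_iff.mpr hm), ?_⟩
                rw [dio_cons]
                exact hopenrec _ ((dio_cons _ _ _ _).mp h3)
            | bi =>
                exact absurd (hval.2 (Set.mem_insert _ _)
                  (Set.mem_insert_of_mem _ rfl)) hval.1
        | inr F =>
            cases d' with
            | fwd => exact (hval : False).elim
            | bi =>
                exact absurd (hval.2 (Set.mem_insert _ _)
                  (Set.mem_insert_of_mem _ rfl)) hval.1
            | bwd =>
                cases rest with
                | nil => exact (Sum.inr_ne_inl (show Sum.inr F = Sum.inl y from hrest)).elim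
                | cons t' rest'' =>
                  obtain ⟨c', e', w'⟩ := t'
                  obtain ⟨rfl, hval2, hrest2⟩ := hrest
                  cases e' with
                  | bwd => cases w' <;> exact (hval2 : False).elim
                  | bi =>
                      exact absurd (hval2.2 (Set.mem_insert _ _)
                        (Set.mem_insert_of_mem _ rfl)) hval2.1
                  | fwd =>
                      cases w' with
                      | inr F' => exact (hval2 : False).elim
                      | inl w =>
                        obtain ⟨lrec, hwrec, hopenrec⟩ :=
                          ih rest'' (by simp at hl ⊢; omega) w y hrest2
                        by_cases hxw : x = w
                        · subst hxw
                          refine ⟨lrec, hwrec, ?_⟩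
                          intro D hopen
                          obtain ⟨h1, h2, c1, c2, c3⟩ := hopen
                          have h5 : OpenFrom E Z True x lrec :=
                            hopenrec True ((openFrom_congr
                              (by simp [Step.HeadAtDst])).mp ((dio_cons _ _ _ _).mp c3))
                          cases lrec with
                          | nil => trivial
                          | cons u lr =>
                            obtain ⟨g1, g2, g3⟩ := h5
                            refine ⟨fun hD => g1 ⟨trivial, hD.2⟩, ?_, g3⟩
                            intro hD
                            by_cases hu : u.HeadAtSrc
                            · intro hz
                              exact h2 (fun hDs => hD ⟨hDs.1, hu⟩)
                                (inl_mem_image_iff.mpr hz)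
                            · exact g2 (fun g => hu g.2)
                        · refine ⟨⟨x, .bi, w⟩ :: lrec, ⟨rfl, ⟨hxw, ?_⟩, hwrec⟩, ?_⟩
                          · refine hH.2 F.1 F.2.1 {x, w} ?_
                            intro v hv
                            rcases Set.mem_insert_iff.mp hv with rfl | h
                            · exact hval
                            · rw [Set.mem_singleton_iff] at h
                              subst h
                              exact hval2
                          · intro D hopen
                            obtain ⟨h1, h2, c1, c2, c3⟩ := hopen
                            have h5 : OpenFrom E Z True w lrec :=
                              hopenrec True ((openFrom_congr
                                (by simp [Step.HeadAtDst])).mp ((dio_cons _ _ _ _).mp c3))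
                            refine ⟨fun hD => aug_ancSet_iff.mp (h1 ⟨hD.1, Or.inl rfl⟩),
                              fun hD hz => h2 (fun g => hD ⟨g.1, Or.inr rfl⟩)
                                (inl_mem_image_iff.mpr hz), ?_⟩
                            rw [dio_cons]
                            exact (openFrom_congr (by simp [Step.HeadAtDst])).mpr h5

/-- d-separation in a HEDG `G` is equivalent to (ordinary Pearl)
d-separation in its augmented directed graph `G^aug`. -/
theorem dSep_iff_dSep_augmented {V : Type*} [Fintype V]
    (E : V → V → Prop) (H : Set (Set V)) (hH : IsSimplicial H) (X Y Z : Set V) :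
    DSep E H X Y Z ↔
      DSep (AugE E H) (TrivialH (V ⊕ {F : Set V // MaximalHyperedge H F}))
        (Sum.inl '' X) (Sum.inl '' Y) (Sum.inl '' Z) := by
  constructor
  · intro hsep
    rintro x' ⟨x, hx, rfl⟩ y' ⟨y, hy, rfl⟩ l' hw ⟨hxz, hyz, hopen⟩
    obtain ⟨l, hwl, hop⟩ := walk_from_aug hH Z l'.length l' le_rfl x y hw
    refine hsep x hx y hy l hwl
      ⟨fun h => hxz (inl_mem_image_iff.mpr h), fun h => hyz (inl_mem_image_iff.mpr h), ?_⟩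
    exact dio_of_openFrom (hop False (openFrom_false hxz hopen))
  · intro hsep'
    intro x hx y hy l hw ⟨hxz, hyz, hopen⟩
    obtain ⟨l', hw', hop⟩ := walk_to_aug hH Z l x y hw
    refine hsep' (Sum.inl x) ⟨x, hx, rfl⟩ (Sum.inl y) ⟨y, hy, rfl⟩ l' hw'
      ⟨fun h => hxz (inl_mem_image_iff.mp h), fun h => hyz (inl_mem_image_iff.mp h), ?_⟩
    exact dio_of_openFrom (hop False (openFrom_false hxz hopen))

end HedgPaper
end

section
/- For a directed graph G=(V,E) and subsets X,Y,Z ⊆ V such that G = Anc^G(X∪Y∪Z), d-separation of X from Y given Z in G is equivalent to separation of X from Y given Z in the moralization G^moral. (This holds even when G contains directed cycles.) -/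
namespace HedgPaper

variable {V : Type*}

lemma valid_cases {E : V → V → Prop} {s : Step V} (h : s.Valid E (TrivialH V)) :
    (s.dir = .fwd ∧ E s.src s.dst) ∨ (s.dir = .bwd ∧ E s.dst s.src) := by
  rcases s with ⟨a, d, b⟩
  cases d with
  | fwd => exact Or.inl ⟨rfl, h⟩
  | bwd => exact Or.inr ⟨rfl, h⟩
  | bi => exact absurd (h.2 (Set.mem_insert _ _) (Set.mem_insert_of_mem _ rfl)) h.1

lemma open_cons {E : V → V → Prop} {Z : Set V} {s : Step V} {l : List (Step V)}
    (hl : DInteriorOpen E Z l)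
    (h : ∀ t ∈ l.head?, (s.HeadAtDst ∧ t.HeadAtSrc → s.dst ∈ AncSet E Z) ∧
        (¬ (s.HeadAtDst ∧ t.HeadAtSrc) → s.dst ∉ Z)) :
    DInteriorOpen E Z (s :: l) := by
  cases l with
  | nil => trivial
  | cons t l' => exact ⟨(h t rfl).1, (h t rfl).2, hl⟩

lemma open_tail {E : V → V → Prop} {Z : Set V} {s : Step V} {l : List (Step V)}
    (hl : DInteriorOpen E Z (s :: l)) : DInteriorOpen E Z l := by
  cases l with
  | nil => trivial
  | cons t l' => exact hl.2.2

lemma reach_avoid {E : V → V → Prop} {Z : Set V} {v t : V} (h : Reach E v t) :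
    v ∉ AncSet E Z →
    Relation.ReflTransGen (fun a b => E a b ∧ b ∉ AncSet E Z) v t ∧ t ∉ AncSet E Z := by
  induction h using Relation.ReflTransGen.head_induction_on with
  | refl => exact fun hv => ⟨Relation.ReflTransGen.refl, hv⟩
  | @head a c hac hct ih =>
      intro hv
      have hc : c ∉ AncSet E Z := fun ⟨z, hz, hr⟩ => hv ⟨z, hz, Relation.ReflTransGen.head hac hr⟩
      obtain ⟨hchain, ht⟩ := ih hc
      exact ⟨Relation.ReflTransGen.head ⟨hac, hc⟩ hchain, ht⟩

lemma notAnc_notZ {E : V → V → Prop} {Z : Set V} {v : V} (h : v ∉ AncSet E Z) : v ∉ Z :=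
  fun hv => h ⟨v, hv, Relation.ReflTransGen.refl⟩

lemma fwd_walk {E : V → V → Prop} {Z : Set V} {v t : V}
    (h : Relation.ReflTransGen (fun a b => E a b ∧ b ∉ AncSet E Z) v t) :
    ∃ l, IsWalk E (TrivialH V) l v t ∧ DInteriorOpen E Z l ∧ ∀ s ∈ l.head?, ¬ s.HeadAtSrc := by
  induction h using Relation.ReflTransGen.head_induction_on with
  | refl => exact ⟨[], rfl, trivial, by simp⟩
  | @head a c hac hct ih =>
      obtain ⟨l, hw, ho, hh⟩ := ih
      refine ⟨⟨a, .fwd, c⟩ :: l, ⟨rfl, hac.1, hw⟩, open_cons ho ?_, ?_⟩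
      · intro u hu
        refine ⟨fun hcol => absurd hcol.2 (hh u hu), fun _ => notAnc_notZ hac.2⟩
      · intro u hu
        rw [List.head?_cons, Option.mem_def, Option.some.injEq] at hu
        subst hu
        simp [Step.HeadAtSrc]

lemma bwd_walk {E : V → V → Prop} {Z : Set V} {w τ : V}
    (h : Relation.ReflTransGen (fun a b => E a b ∧ b ∉ AncSet E Z) w τ) :
    ∀ l y, IsWalk E (TrivialH V) l w y → DInteriorOpen E Z l → w ∉ Z →
    ∃ l', IsWalk E (TrivialH V) l' τ y ∧ DInteriorOpen E Z l' := by
  induction h using Relation.ReflTransGen.head_induction_on with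
  | refl => exact fun l y hw ho _ => ⟨l, hw, ho⟩
  | @head a c hac hct ih =>
      intro l y hw ho haZ
      refine ih (⟨c, .bwd, a⟩ :: l) y ⟨rfl, hac.1, hw⟩ (open_cons ho ?_) (notAnc_notZ hac.2)
      intro u hu
      constructor
      · rintro ⟨(h1 | h1), _⟩ <;> cases h1
      · exact fun _ => haZ

theorem toMoral (E : V → V → Prop) (Z : Set V) :
    ∀ (l : List (Step V)) (x y : V),
    IsWalk E (TrivialH V) l x y → DInteriorOpen E Z l → y ∉ Z →
    Relation.ReflTransGen (fun a b => MoralDirE E a b ∧ b ∉ Z) x y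
  | [], x, y, hw, _, _ => hw ▸ Relation.ReflTransGen.refl
  | [s], x, y, hw, _, hy => by
      obtain ⟨hsrc, hval, hdst⟩ := hw
      by_cases hxy : x = y
      · exact hxy ▸ Relation.ReflTransGen.refl
      · refine Relation.ReflTransGen.single ⟨⟨hxy, ?_⟩, hy⟩
        rcases valid_cases hval with ⟨_, he⟩ | ⟨_, he⟩
        · exact Or.inl (hsrc ▸ hdst ▸ he)
        · exact Or.inr (Or.inl (hsrc ▸ hdst ▸ he))
  | s :: t :: l, x, y, hw, ho, hy => by
      obtain ⟨hsrc, hsv, hw'⟩ := hw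
      obtain ⟨htsrc, htv, hwl⟩ := hw'
      obtain ⟨hcol, hnon, hrest⟩ := ho
      by_cases hc : s.HeadAtDst ∧ t.HeadAtSrc
      · -- collider at s.dst
        have hsE : E x s.dst := by
          rcases valid_cases hsv with ⟨_, he⟩ | ⟨hd, _⟩
          · exact hsrc ▸ he
          · exact absurd hc.1 (by rw [Step.HeadAtDst, hd]; rintro (h | h) <;> cases h)
        have htE : E t.dst s.dst := by
          rcases valid_cases htv with ⟨hd, _⟩ | ⟨_, he⟩
          · exact absurd hc.2 (by rw [Step.HeadAtSrc, hd]; rintro (h | h) <;> cases h)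
          · exact htsrc ▸ he
        have htbwd : ¬ t.HeadAtDst := by
          rcases valid_cases htv with ⟨hd, _⟩ | ⟨hd, _⟩
          · exact absurd hc.2 (by rw [Step.HeadAtSrc, hd]; rintro (h | h) <;> cases h)
          · rw [Step.HeadAtDst, hd]; rintro (h | h) <;> cases h
        have hwZ : t.dst ∉ Z := by
          cases l with
          | nil => exact hwl ▸ hy
          | cons u l' => exact hrest.2.1 (fun hcc => htbwd hcc.1)
        have tail := toMoral E Z l t.dst y hwl (open_tail hrest) hy
        by_cases hxw : x = t.dst
        · exact hxw ▸ tail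
        · exact Relation.ReflTransGen.head ⟨⟨hxw, Or.inr (Or.inr ⟨s.dst, hsE, htE⟩)⟩, hwZ⟩ tail
      · have hcZ : s.dst ∉ Z := hnon hc
        have tail := toMoral E Z (t :: l) s.dst y ⟨htsrc, htv, hwl⟩ hrest hy
        by_cases hxc : x = s.dst
        · exact hxc ▸ tail
        · refine Relation.ReflTransGen.head ⟨⟨hxc, ?_⟩, hcZ⟩ tail
          rcases valid_cases hsv with ⟨_, he⟩ | ⟨_, he⟩
          · exact Or.inl (hsrc ▸ he)
          · exact Or.inr (Or.inl (hsrc ▸ he))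


lemma fromMoral (E : V → V → Prop) (X Y Z : Set V)
    (hanc : ∀ v : V, ∃ t ∈ X ∪ Y ∪ Z, Reach E v t)
    {y : V} (hy : y ∈ Y) (hyZ : y ∉ Z) :
    ∀ v, Relation.ReflTransGen (fun a b => MoralDirE E a b ∧ b ∉ Z) v y → v ∉ Z →
    (∃ x' ∈ X, x' ∉ Z ∧ ∃ y' ∈ Y, y' ∉ Z ∧ ∃ l, IsWalk E (TrivialH V) l x' y' ∧
      DInteriorOpen E Z l) ∨
    (∃ y' ∈ Y, y' ∉ Z ∧ ∃ l, IsWalk E (TrivialH V) l v y' ∧ DInteriorOpen E Z l) := by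
  intro v hpath
  induction hpath using Relation.ReflTransGen.head_induction_on with
  | refl => exact fun _ => Or.inr ⟨y, hy, hyZ, [], rfl, trivial⟩
  | @head a b hedge hchain ih =>
      intro _
      obtain ⟨⟨hne, hcase⟩, hbZ⟩ := hedge
      rcases ih hbZ with done | ⟨y', hy', hy'Z, l, hw, ho⟩
      · exact Or.inl done
      rcases hcase with hEab | hEba | ⟨c, hac, hbc⟩
      · -- forward edge a → b
        by_cases hb : b ∈ AncSet E Z
        · exact Or.inr ⟨y', hy', hy'Z, ⟨a, .fwd, b⟩ :: l, ⟨rfl, hEab, hw⟩,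
            open_cons ho (fun u _ => ⟨fun _ => hb, fun _ => hbZ⟩)⟩
        · -- surgery at b
          obtain ⟨τ, hτmem, hreach⟩ := hanc b
          obtain ⟨hchain', hτA⟩ := reach_avoid hreach hb
          have hτZ : τ ∉ Z := notAnc_notZ hτA
          rcases hτmem with (hτX | hτY) | hτZ'
          · obtain ⟨l', hw', ho'⟩ := bwd_walk hchain' l y' hw ho hbZ
            exact Or.inl ⟨τ, hτX, hτZ, y', hy', hy'Z, l', hw', ho'⟩
          · obtain ⟨l₂, hw₂, ho₂, hh₂⟩ := fwd_walk hchain'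
            refine Or.inr ⟨τ, hτY, hτZ, ⟨a, .fwd, b⟩ :: l₂, ⟨rfl, hEab, hw₂⟩,
              open_cons ho₂ (fun u hu => ⟨fun hcol => absurd hcol.2 (hh₂ u hu),
                fun _ => hbZ⟩)⟩
          · exact absurd hτZ' hτZ
      · -- backward edge b → a
        refine Or.inr ⟨y', hy', hy'Z, ⟨a, .bwd, b⟩ :: l, ⟨rfl, hEba, hw⟩,
          open_cons ho (fun u _ => ⟨?_, fun _ => hbZ⟩)⟩
        rintro ⟨(h1 | h1), _⟩ <;> cases h1
      · -- common child c
        by_cases hcA : c ∈ AncSet E Z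
        · refine Or.inr ⟨y', hy', hy'Z, ⟨a, .fwd, c⟩ :: ⟨c, .bwd, b⟩ :: l,
            ⟨rfl, hac, rfl, hbc, hw⟩, open_cons (open_cons ho ?_) ?_⟩
          · rintro u _
            refine ⟨?_, fun _ => hbZ⟩
            rintro ⟨(h1 | h1), _⟩ <;> cases h1
          · intro u hu
            exact ⟨fun _ => hcA, fun h => absurd ⟨Or.inl rfl, by
              rw [List.head?_cons, Option.mem_def, Option.some.injEq] at hu
              subst hu
              exact Or.inl rfl⟩ h⟩
        · have hcZ : c ∉ Z := notAnc_notZ hcA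
          obtain ⟨τ, hτmem, hreach⟩ := hanc c
          obtain ⟨hchain', hτA⟩ := reach_avoid hreach hcA
          have hτZ : τ ∉ Z := notAnc_notZ hτA
          rcases hτmem with (hτX | hτY) | hτZ'
          · have hw2 : IsWalk E (TrivialH V) (⟨c, .bwd, b⟩ :: l) c y' := ⟨rfl, hbc, hw⟩
            have ho2 : DInteriorOpen E Z (⟨c, .bwd, b⟩ :: l) := by
              refine open_cons ho (fun u _ => ⟨?_, fun _ => hbZ⟩)
              rintro ⟨(h1 | h1), _⟩ <;> cases h1
            obtain ⟨l', hw', ho'⟩ := bwd_walk hchain' _ y' hw2 ho2 hcZ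
            exact Or.inl ⟨τ, hτX, hτZ, y', hy', hy'Z, l', hw', ho'⟩
          · obtain ⟨l₂, hw₂, ho₂, hh₂⟩ := fwd_walk hchain'
            exact Or.inr ⟨τ, hτY, hτZ, ⟨a, .fwd, c⟩ :: l₂, ⟨rfl, hac, hw₂⟩,
              open_cons ho₂ (fun u hu => ⟨fun hcol => absurd hcol.2 (hh₂ u hu),
                fun _ => hcZ⟩)⟩
          · exact absurd hτZ' hτZ

lemma last_notZ {A : V → V → Prop} {Z : Set V} {x y : V}
    (h : Relation.ReflTransGen (fun a b => A a b ∧ b ∉ Z) x y) (hx : x ∉ Z) : y ∉ Z := by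
  induction h with
  | refl => exact hx
  | tail _ e _ => exact e.2

/-- For a directed graph `G = (V,E)` (possibly with cycles) such that
`G = Anc^G(X ∪ Y ∪ Z)`, d-separation of `X` from `Y` given `Z` is equivalent to
separation of `X` from `Y` given `Z` in the moralization `G^moral`. -/
theorem dSep_iff_moral_sep_of_ancestral {V : Type*} [Fintype V]
    (E : V → V → Prop) (X Y Z : Set V)
    (hanc : ∀ v : V, ∃ t ∈ X ∪ Y ∪ Z, Reach E v t) :
    DSep E (TrivialH V) X Y Z ↔ USep (MoralDirE E) X Y Z := by
  constructor
  · intro hD x hx y hy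
    rintro ⟨hxZ, hpath⟩
    have hyZ := last_notZ hpath hxZ
    rcases fromMoral E X Y Z hanc hy hyZ x hpath hxZ with
      ⟨x', hx', hx'Z, y', hy', hy'Z, l, hw, ho⟩ | ⟨y', hy', hy'Z, l, hw, ho⟩
    · exact hD x' hx' y' hy' l hw ⟨hx'Z, hy'Z, ho⟩
    · exact hD x hx y' hy' l hw ⟨hxZ, hy'Z, ho⟩
  · intro hU x hx y hy l hw
    rintro ⟨hxZ, hyZ, ho⟩
    exact hU x hx y hy ⟨hxZ, toMoral E Z l x y hw ho hyZ⟩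

end HedgPaper
end
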